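/- arXiv:2506.12829 — 4 statements merged into one kernel-verified Lean document; each statement's English description precedes it below -/
import Mathlib

section
/- Let X be a measurable space, let D_X^S and D_X^T be probability measures on X, let f_S, f_T : X → [0,1] be measurable labeling functions, and let H be a set of measurable functions X → [0,1] with f_S, f_T ∈ H. For h ∈ H define ε_S(h) = E_{x∼D_X^S}|h(x) − f_S(x)| and ε_T(h) = E_{x∼D_X^T}|h(x) − f_T(x)|. Define the H̃-divergence d_{H̃}(D_X^S, D_X^T) = 2·sup{ |D_X^S(A) − D_X^T(A)| : A = {x : |h(x) − h'(x)| > t}, h, h' ∈ H, t ∈ [0,1] }. Then for every h ∈ H: ε_T(h) ≤ ε_S(h) + d_{H̃}(D_X^S, D_X^T) + min{ E_{x∼D_X^S}|f_S(x) − f_T(x)|, E_{x∼D_X^T}|f_S(x) − f_T(x)| }. -/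
open MeasureTheory
open scoped ENNReal

private lemma meas_lt_antitone {X : Type*} [MeasurableSpace X]
    (μ : Measure X) [IsProbabilityMeasure μ] (g : X → ℝ) :
    Antitone (fun t : ℝ => (μ {x | t < g x}).toReal) := by
  intro s t hst
  exact ENNReal.toReal_mono (measure_ne_top μ _)
    (measure_mono (fun x hx => lt_of_le_of_lt hst hx))

private lemma integral_shift_bound {X : Type*} [MeasurableSpace X]
    (P Q : Measure X) [IsProbabilityMeasure P] [IsProbabilityMeasure Q]
    (g : X → ℝ) (hg : Measurable g) (h0 : ∀ x, 0 ≤ g x) (h1 : ∀ x, g x ≤ 1)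
    (S : ℝ)
    (hS : ∀ t ∈ Set.Ioc (0:ℝ) 1,
      (Q {x | t < g x}).toReal - (P {x | t < g x}).toReal ≤ S) :
    ∫ x, g x ∂Q ≤ ∫ x, g x ∂P + S := by
  have hint : ∀ (μ : Measure X) [IsProbabilityMeasure μ], Integrable g μ := by
    intro μ _
    refine (integrable_const (1:ℝ)).mono' hg.aestronglyMeasurable ?_
    exact Filter.Eventually.of_forall fun x => by
      rw [Real.norm_eq_abs, abs_of_nonneg (h0 x)]; exact h1 x
  set FP : ℝ → ℝ := fun t => (P {x | t < g x}).toReal with hFP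
  set FQ : ℝ → ℝ := fun t => (Q {x | t < g x}).toReal with hFQ
  have key : ∀ (μ : Measure X) [IsProbabilityMeasure μ],
      ∫ x, g x ∂μ = ∫ t in Set.Ioc (0:ℝ) 1, (μ {x | t < g x}).toReal := by
    intro μ _
    rw [(hint μ).integral_eq_integral_meas_lt (Filter.Eventually.of_forall h0)]
    show ∫ t in Set.Ioi (0:ℝ), (μ {x | t < g x}).toReal = _
    rw [setIntegral_eq_of_subset_of_ae_diff_eq_zero
        nullMeasurableSet_Ioi Set.Ioc_subset_Ioi_self]
    refine Filter.Eventually.of_forall fun t ht => ?_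
    have ht1 : (1:ℝ) < t := by
      simp only [Set.mem_diff, Set.mem_Ioi, Set.mem_Ioc, not_and, not_le] at ht
      exact ht.2 ht.1
    have : {x | t < g x} = ∅ := by
      ext x; simp only [Set.mem_setOf_eq, Set.mem_empty_iff_false, iff_false, not_lt]
      exact (h1 x).trans ht1.le
    simp [this]
  have hFPi : IntegrableOn FP (Set.Ioc 0 1) volume := by
    refine (integrable_const (1:ℝ)).mono'
      ((meas_lt_antitone P g).measurable.aestronglyMeasurable) ?_
    refine Filter.Eventually.of_forall fun t => ?_
    rw [Real.norm_eq_abs, abs_of_nonneg ENNReal.toReal_nonneg]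
    exact ENNReal.toReal_le_of_le_ofReal one_pos.le (by simpa using prob_le_one)
  have hFQi : IntegrableOn FQ (Set.Ioc 0 1) volume := by
    refine (integrable_const (1:ℝ)).mono'
      ((meas_lt_antitone Q g).measurable.aestronglyMeasurable) ?_
    refine Filter.Eventually.of_forall fun t => ?_
    rw [Real.norm_eq_abs, abs_of_nonneg ENNReal.toReal_nonneg]
    exact ENNReal.toReal_le_of_le_ofReal one_pos.le (by simpa using prob_le_one)
  rw [key P, key Q]
  have hsub : ∫ t in Set.Ioc (0:ℝ) 1, (FQ t - FP t) ≤ S := by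
    calc ∫ t in Set.Ioc (0:ℝ) 1, (FQ t - FP t)
        ≤ ∫ _t in Set.Ioc (0:ℝ) 1, S := by
          refine setIntegral_mono_on (hFQi.sub hFPi) (integrableOn_const (by simp) (by simp))
            measurableSet_Ioc fun t ht => hS t ht
      _ = S := by simp
  have := integral_sub hFQi hFPi
  simp only [hFQ, hFP] at this hsub ⊢
  linarith [hsub, this ▸ hsub]

/-- Existing cross-domain learning bound (Zhao et al.): for binary classification with
deterministic labeling functions `fS, fT` and absolute-error loss, the target error of any
hypothesis `h ∈ H` is bounded by its source error, plus the `H̃`-divergence between the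
covariate distributions, plus the smaller of the two concept-shift terms. -/
theorem existing_learning_bound {X : Type*} [MeasurableSpace X]
    (P Q : Measure X) [IsProbabilityMeasure P] [IsProbabilityMeasure Q]
    (H : Set (X → ℝ))
    (hHmeas : ∀ g ∈ H, Measurable g)
    (hHrange : ∀ g ∈ H, ∀ x, g x ∈ Set.Icc (0 : ℝ) 1)
    (fS fT : X → ℝ) (hfS : fS ∈ H) (hfT : fT ∈ H)
    (h : X → ℝ) (hh : h ∈ H) :
    ∫ x, |h x - fT x| ∂Q ≤
      (∫ x, |h x - fS x| ∂P)
      + 2 * sSup {r : ℝ | ∃ g ∈ H, ∃ g' ∈ H, ∃ t ∈ Set.Icc (0 : ℝ) 1,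
          r = |(P {x | t < |g x - g' x|}).toReal - (Q {x | t < |g x - g' x|}).toReal|}
      + min (∫ x, |fS x - fT x| ∂P) (∫ x, |fS x - fT x| ∂Q) := by
  set D := {r : ℝ | ∃ g ∈ H, ∃ g' ∈ H, ∃ t ∈ Set.Icc (0 : ℝ) 1,
      r = |(P {x | t < |g x - g' x|}).toReal - (Q {x | t < |g x - g' x|}).toReal|} with hD
  set S := sSup D with hSdef
  -- boundedness and nonemptiness of D
  have hbdd : BddAbove D := by
    refine ⟨1, fun r hr => ?_⟩
    obtain ⟨g, _, g', _, t, _, rfl⟩ := hr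
    have h1 : ∀ (μ : Measure X) [IsProbabilityMeasure μ],
        (μ {x | t < |g x - g' x|}).toReal ≤ 1 := fun μ _ =>
      ENNReal.toReal_le_of_le_ofReal one_pos.le (by simpa using prob_le_one)
    have h0 : ∀ (μ : Measure X), (0:ℝ) ≤ (μ {x | t < |g x - g' x|}).toReal :=
      fun μ => ENNReal.toReal_nonneg
    rw [abs_sub_le_iff]
    constructor <;> linarith [h1 P, h1 Q, h0 P, h0 Q]
  have hmem0 : (0:ℝ) ∈ D := by
    refine ⟨fS, hfS, fS, hfS, 1, ⟨one_pos.le, le_refl 1⟩, ?_⟩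
    have he : {x : X | (1:ℝ) < |fS x - fS x|} = ∅ := by
      ext x; norm_num
    rw [he]
    simp
  have hS0 : 0 ≤ S := le_csSup hbdd hmem0
  -- generic bound for pairs in H
  have habs : ∀ g ∈ H, ∀ g' ∈ H,
      ∫ x, |g x - g' x| ∂Q ≤ ∫ x, |g x - g' x| ∂P + S := by
    intro g hg g' hg'
    refine integral_shift_bound P Q (fun x => |g x - g' x|)
      ((hHmeas g hg).sub (hHmeas g' hg')).abs (fun x => abs_nonneg _) ?_ S ?_
    · intro x
      have h1 := hHrange g hg x; have h2 := hHrange g' hg' x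
      simp only [Set.mem_Icc] at h1 h2
      rw [abs_le]
      exact ⟨by linarith, by linarith⟩
    · intro t ht
      have hmem : |(P {x | t < |g x - g' x|}).toReal - (Q {x | t < |g x - g' x|}).toReal| ∈ D :=
        ⟨g, hg, g', hg', t, ⟨ht.1.le, ht.2⟩, rfl⟩
      have := le_csSup hbdd hmem
      calc (Q {x | t < |g x - g' x|}).toReal - (P {x | t < |g x - g' x|}).toReal
          ≤ |(P {x | t < |g x - g' x|}).toReal - (Q {x | t < |g x - g' x|}).toReal| := by
            rw [abs_sub_comm]; exact le_abs_self _
        _ ≤ S := this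
  -- integrability facts
  have hint : ∀ (μ : Measure X) [IsProbabilityMeasure μ], ∀ g ∈ H, ∀ g' ∈ H,
      Integrable (fun x => |g x - g' x|) μ := by
    intro μ _ g hg g' hg'
    refine (integrable_const (1:ℝ)).mono'
      ((hHmeas g hg).sub (hHmeas g' hg')).abs.aestronglyMeasurable ?_
    refine Filter.Eventually.of_forall fun x => ?_
    have h1 := hHrange g hg x; have h2 := hHrange g' hg' x
    simp only [Set.mem_Icc] at h1 h2
    rw [Real.norm_eq_abs, abs_abs, abs_le]
    constructor <;> linarith
  -- two triangle-inequality routes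
  have tri : ∀ (μ : Measure X) [IsProbabilityMeasure μ],
      ∫ x, |h x - fT x| ∂μ ≤ ∫ x, |h x - fS x| ∂μ + ∫ x, |fS x - fT x| ∂μ := by
    intro μ _
    rw [← integral_add (hint μ h hh fS hfS) (hint μ fS hfS fT hfT)]
    refine integral_mono (hint μ h hh fT hfT)
      ((hint μ h hh fS hfS).add (hint μ fS hfS fT hfT)) fun x => ?_
    calc |h x - fT x| = |(h x - fS x) + (fS x - fT x)| := by ring_nf
      _ ≤ |h x - fS x| + |fS x - fT x| := abs_add_le _ _
  have routeA : ∫ x, |h x - fT x| ∂Q ≤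
      ∫ x, |h x - fS x| ∂P + S + ∫ x, |fS x - fT x| ∂Q := by
    have := tri Q
    have h2 := habs h hh fS hfS
    linarith
  have routeB : ∫ x, |h x - fT x| ∂Q ≤
      ∫ x, |h x - fS x| ∂P + S + ∫ x, |fS x - fT x| ∂P := by
    have h1 := habs h hh fT hfT
    have h2 := tri P
    linarith
  have : ∫ x, |h x - fT x| ∂Q ≤
      ∫ x, |h x - fS x| ∂P + S + min (∫ x, |fS x - fT x| ∂P) (∫ x, |fS x - fT x| ∂Q) := by
    rcases min_cases (∫ x, |fS x - fT x| ∂P) (∫ x, |fS x - fT x| ∂Q) with ⟨he, _⟩ | ⟨he, _⟩ <;>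
      rw [he]
    · exact routeB
    · exact routeA
  linarith
end

section
/- Let P and Q be probability measures on metric spaces, let β > 0, and for a coupling γ of P and Q define F(γ) = ∫ ρ(x, x') dγ(x, x') + β·KL(γ ‖ P ⊗ Q). Then F is strongly convex at midpoints with respect to total variation: for any two couplings γ₀, γ₁ of P and Q with F(γ₀), F(γ₁) < ∞, F((γ₀ + γ₁)/2) ≤ (1/2)F(γ₀) + (1/2)F(γ₁) − (β/2)·d_TV(γ₀, γ₁)². -/
open MeasureTheory
open scoped ENNReal

noncomputable section

/-- A coupling of `P` and `Q`: a probability measure on the product whose marginals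
are `P` and `Q`. -/
def IsCoupling {X X' : Type*} [MeasurableSpace X] [MeasurableSpace X']
    (γ : Measure (X × X')) (P : Measure X) (Q : Measure X') : Prop :=
  IsProbabilityMeasure γ ∧ γ.map Prod.fst = P ∧ γ.map Prod.snd = Q

open Classical in
/-- Kullback–Leibler divergence (relative entropy) of `μ` with respect to `ν`. -/
def KLdiv {α : Type*} [MeasurableSpace α] (μ ν : Measure α) : ℝ≥0∞ :=
  if μ ≪ ν ∧ Integrable (llr μ ν) μ then ENNReal.ofReal (∫ x, llr μ ν x ∂μ) else ⊤

/-- Total-variation distance between two measures. -/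
def dTV {α : Type*} [MeasurableSpace α] (μ ν : Measure α) : ℝ :=
  sSup {r : ℝ | ∃ A : Set α, MeasurableSet A ∧ r = |(μ A).toReal - (ν A).toReal|}

/-- Entropic optimal transport objective `F(γ) = ∫ ρ dγ + β·KL(γ ‖ P ⊗ Q)`. -/
def entOTObj {X : Type*} [MeasurableSpace X] [PseudoMetricSpace X] (β : ℝ)
    (P Q : Measure X) (γ : Measure (X × X)) : ℝ≥0∞ :=
  (∫⁻ p, edist p.1 p.2 ∂γ) + ENNReal.ofReal β * KLdiv γ (P.prod Q)

section Aux
open Real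


lemma aux_hasDerivAt_F {t : ℝ} (h1 : -1 < t) (h2 : t < 1) :
    HasDerivAt (fun t : ℝ => Real.log (1+t) - Real.log (1-t) - 2*t)
      (1/(1+t) + 1/(1-t) - 2) t := by
  have ha : HasDerivAt (fun t : ℝ => 1 + t) 1 t := by
    simpa using (hasDerivAt_id t).const_add (1:ℝ)
  have hb : HasDerivAt (fun t : ℝ => 1 - t) (-1) t := by
    simpa using (hasDerivAt_id t).const_sub (1:ℝ)
  have h1' : (1:ℝ)+t ≠ 0 := by linarith
  have h2' : (1:ℝ)-t ≠ 0 := by linarith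
  have hl1 := ha.log h1'
  have hl2 := hb.log h2'
  have hc : HasDerivAt (fun t : ℝ => 2*t) 2 t := by
    simpa using (hasDerivAt_id t).const_mul (2:ℝ)
  have := (hl1.sub hl2).sub hc
  refine HasDerivAt.congr_deriv this ?_
  ring

lemma aux_F {t : ℝ} (h0 : 0 ≤ t) (h1 : t < 1) :
    2*t ≤ Real.log (1+t) - Real.log (1-t) := by
  set F : ℝ → ℝ := fun t => Real.log (1+t) - Real.log (1-t) - 2*t with hF
  have hd : ∀ x ∈ Set.Ico (0:ℝ) 1, HasDerivAt F (1/(1+x) + 1/(1-x) - 2) x := by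
    intro x hx
    exact aux_hasDerivAt_F (by linarith [hx.1]) hx.2
  have hmono : MonotoneOn F (Set.Ico (0:ℝ) 1) := by
    apply monotoneOn_of_deriv_nonneg (convex_Ico 0 1)
    · intro x hx
      exact ((hd x hx).continuousAt).continuousWithinAt
    · intro x hx
      rw [interior_Ico] at hx
      exact ((hd x ⟨hx.1.le, hx.2⟩).differentiableAt).differentiableWithinAt
    · intro x hx
      rw [interior_Ico] at hx
      rw [(hd x ⟨hx.1.le, hx.2⟩).deriv]
      have hx1 : (0:ℝ) < 1 + x := by linarith [hx.1]
      have hx2 : (0:ℝ) < 1 - x := by linarith [hx.2]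
      have : 1/(1+x) + 1/(1-x) - 2 = 2*x^2/((1+x)*(1-x)) := by field_simp; ring
      rw [this]; positivity
  have h00 : F 0 = 0 := by simp [hF]
  have := hmono (Set.mem_Ico.2 ⟨le_refl 0, one_pos⟩) (Set.mem_Ico.2 ⟨h0, h1⟩) h0
  rw [h00] at this
  simp only [hF] at this
  linarith

lemma aux_G {t : ℝ} (h0 : 0 ≤ t) (h1 : t < 1) :
    t^2 ≤ (1+t)*Real.log (1+t) + (1-t)*Real.log (1-t) := by
  set G : ℝ → ℝ := fun t => (1+t)*Real.log (1+t) + (1-t)*Real.log (1-t) - t^2 with hG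
  have hd : ∀ x ∈ Set.Ico (0:ℝ) 1, HasDerivAt G
      (Real.log (1+x) - Real.log (1-x) - 2*x) x := by
    intro x hx
    have h1' : (1:ℝ)+x ≠ 0 := by linarith [hx.1]
    have h2' : (1:ℝ)-x ≠ 0 := by linarith [hx.2]
    have ha : HasDerivAt (fun t : ℝ => 1 + t) 1 x := by
      simpa using (hasDerivAt_id x).const_add (1:ℝ)
    have hb : HasDerivAt (fun t : ℝ => 1 - t) (-1) x := by
      simpa using (hasDerivAt_id x).const_sub (1:ℝ)
    have hA : HasDerivAt (fun t : ℝ => (1+t)*Real.log (1+t))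
        (1 * Real.log (1+x) + (1+x) * (1/(1+x))) x := ha.mul (ha.log h1')
    have hB : HasDerivAt (fun t : ℝ => (1-t)*Real.log (1-t))
        ((-1) * Real.log (1-x) + (1-x) * ((-1)/(1-x))) x := hb.mul (hb.log h2')
    have hC : HasDerivAt (fun t : ℝ => t^2) (2*x) x := by
      simpa using hasDerivAt_pow 2 x
    have := (hA.add hB).sub hC
    refine HasDerivAt.congr_deriv this ?_
    have e1 : (1+x)*(1/(1+x)) = 1 := by field_simp
    have e2 : (1-x)*((-1)/(1-x)) = -1 := by field_simp
    rw [e1, e2]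
    ring
  have hmono : MonotoneOn G (Set.Ico (0:ℝ) 1) := by
    apply monotoneOn_of_deriv_nonneg (convex_Ico 0 1)
    · intro x hx
      exact ((hd x hx).continuousAt).continuousWithinAt
    · intro x hx
      rw [interior_Ico] at hx
      exact ((hd x ⟨hx.1.le, hx.2⟩).differentiableAt).differentiableWithinAt
    · intro x hx
      rw [interior_Ico] at hx
      rw [(hd x ⟨hx.1.le, hx.2⟩).deriv]
      have := aux_F hx.1.le hx.2
      linarith
  have h00 : G 0 = 0 := by simp [hG]
  have := hmono (Set.mem_Ico.2 ⟨le_refl 0, one_pos⟩) (Set.mem_Ico.2 ⟨h0, h1⟩) h0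
  rw [h00] at this
  simp only [hG] at this
  linarith

lemma phi_pointwise {p q : ℝ} (hp : 0 ≤ p) (hq : 0 ≤ q) :
    (p-q)^2/(p+q)/2 ≤ p*Real.log p + q*Real.log q - 2*((p+q)/2*Real.log ((p+q)/2)) := by
  wlog hqp : q ≤ p generalizing p q
  · have := this hq hp (le_of_not_ge hqp)
    have h1 : (q-p)^2 = (p-q)^2 := by ring
    have h2 : q + p = p + q := by ring
    rw [h1, h2] at this
    linarith
  rcases eq_or_lt_of_le hq with hq0 | hq0
  · -- q = 0
    rcases eq_or_lt_of_le hp with hp0 | hp0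
    · simp [← hp0, ← hq0]
    · -- p > 0, q = 0
      rw [← hq0]
      have hlp2 : Real.log (p/2) = Real.log p - Real.log 2 :=
        Real.log_div (ne_of_gt hp0) two_ne_zero
      have hlog2 : (0.6931471803 : ℝ) < Real.log 2 := Real.log_two_gt_d9
      have : (p-0)^2/(p+0)/2 = p/2 := by field_simp; ring
      rw [this]
      simp only [add_zero, zero_mul, add_zero]
      rw [hlp2]
      nlinarith
  · -- 0 < q ≤ p
    have hp0 : 0 < p := lt_of_lt_of_le hq0 hqp
    set s : ℝ := p + q with hs
    have hs0 : 0 < s := by positivity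
    set t : ℝ := (p - q)/s with ht
    have ht0 : 0 ≤ t := by
      apply div_nonneg (by linarith) hs0.le
    have ht1 : t < 1 := by
      rw [ht, div_lt_one hs0]
      linarith
    have hP : p = s/2*(1+t) := by
      rw [ht]; field_simp; ring
    have hQ : q = s/2*(1-t) := by
      rw [ht]; field_simp; ring
    have hs2 : (0:ℝ) < s/2 := by linarith
    have h1t : (0:ℝ) < 1 + t := by linarith
    have h2t : (0:ℝ) < 1 - t := by linarith
    have hlogp : Real.log p = Real.log (s/2) + Real.log (1+t) := by
      rw [hP, Real.log_mul (ne_of_gt hs2) (ne_of_gt h1t)]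
    have hlogq : Real.log q = Real.log (s/2) + Real.log (1-t) := by
      rw [hQ, Real.log_mul (ne_of_gt hs2) (ne_of_gt h2t)]
    have hkey := aux_G ht0 ht1
    have hLHS : (p-q)^2/(p+q)/2 = s/2*t^2 := by
      rw [ht]; field_simp; ring
    have hRHS : p*Real.log p + q*Real.log q - 2*((p+q)/2*Real.log ((p+q)/2))
        = s/2*((1+t)*Real.log (1+t) + (1-t)*Real.log (1-t)) := by
      rw [hlogp, hlogq]
      rw [hP, hQ]
      have : s/2*(1+t) + s/2*(1-t) = s := by ring
      field_simp
      ring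
    rw [hLHS, hRHS]
    nlinarith

end Aux

section Main
open Real


lemma CauchySchwarz_div {α : Type*} [MeasurableSpace α] (ν : Measure α) [IsFiniteMeasure ν]
    {p q : α → ℝ} (hp : Measurable p) (hq : Measurable q)
    (hp0 : ∀ x, 0 ≤ p x) (hq0 : ∀ x, 0 ≤ q x)
    (hpi : Integrable p ν) (hqi : Integrable q ν) :
    (∫ x, |p x - q x| ∂ν)^2
      ≤ (∫ x, (p x + q x) ∂ν) * ∫ x, (p x - q x)^2/(p x + q x) ∂ν := by
  set f : α → ℝ := fun x => Real.sqrt (p x + q x) with hf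
  set g : α → ℝ := fun x => |p x - q x| / Real.sqrt (p x + q x) with hg
  have hs0 : ∀ x, 0 ≤ p x + q x := fun x => add_nonneg (hp0 x) (hq0 x)
  have hf2 : ∀ x, f x ^ 2 = p x + q x := fun x => Real.sq_sqrt (hs0 x)
  have hg2 : ∀ x, g x ^ 2 = (p x - q x)^2/(p x + q x) := by
    intro x
    rw [hg]
    rw [div_pow, sq_abs, Real.sq_sqrt (hs0 x)]
  have hfg : ∀ x, f x * g x = |p x - q x| := by
    intro x
    rcases eq_or_lt_of_le (hs0 x) with h | h
    · have hp' : p x = 0 := by have := hp0 x; have := hq0 x; linarith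
      have hq' : q x = 0 := by have := hp0 x; have := hq0 x; linarith
      simp [hf, hg, hp', hq']
    · rw [hf, hg, mul_div_assoc']
      rw [mul_comm, mul_div_assoc]
      rw [div_self (by positivity : Real.sqrt (p x + q x) ≠ 0), mul_one]
  have hfm : Measurable f := (hp.add hq).sqrt
  have hgm : Measurable g := (hp.sub hq).abs.div ((hp.add hq).sqrt)
  have hfL2 : MemLp f 2 ν := by
    refine (memLp_two_iff_integrable_sq hfm.aestronglyMeasurable).2 ?_
    have : (fun x => f x ^ 2) = fun x => p x + q x := funext hf2
    rw [this]
    exact hpi.add hqi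
  have hg2i : Integrable (fun x => g x ^ 2) ν := by
    refine (hpi.add hqi).mono (hgm.pow_const 2).aestronglyMeasurable ?_
    filter_upwards with x
    rw [Real.norm_of_nonneg (sq_nonneg _), hg2 x, Pi.add_apply, Real.norm_of_nonneg (hs0 x)]
    rcases eq_or_lt_of_le (hs0 x) with h | h
    · rw [← h]; simp
    · rw [div_le_iff₀ h]
      nlinarith [hp0 x, hq0 x, sq_nonneg (p x - q x)]
  have hgL2 : MemLp g 2 ν := (memLp_two_iff_integrable_sq hgm.aestronglyMeasurable).2 hg2i
  have hconj : (2:ℝ).HolderConjugate 2 := Real.HolderConjugate.two_two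
  have hH := integral_mul_le_Lp_mul_Lq_of_nonneg hconj
    (Filter.Eventually.of_forall fun x => Real.sqrt_nonneg _)
    (Filter.Eventually.of_forall fun x => div_nonneg (abs_nonneg _) (Real.sqrt_nonneg _))
    (by rw [show ENNReal.ofReal (2:ℝ) = 2 by simp]; exact hfL2)
    (by rw [show ENNReal.ofReal (2:ℝ) = 2 by simp]; exact hgL2)
  have hrw : ∀ h : α → ℝ, ∫ a, h a ^ (2:ℝ) ∂ν = ∫ a, h a ^ (2:ℕ) ∂ν := by
    intro h
    congr 1
    funext a
    rw [show (2:ℝ) = ((2:ℕ):ℝ) by norm_num, Real.rpow_natCast]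
  rw [hrw f, hrw g] at hH
  simp only [hfg, hf2] at hH
  simp only [hg2] at hH
  have hfg' : ∀ x, √(p x + q x) * (|p x - q x| / √(p x + q x)) = |p x - q x| := hfg
  simp only [hfg'] at hH
  have hS : 0 ≤ ∫ x, (p x + q x) ∂ν := integral_nonneg fun x => hs0 x
  have hJ : 0 ≤ ∫ x, (p x - q x)^2/(p x + q x) ∂ν :=
    integral_nonneg fun x => div_nonneg (sq_nonneg _) (hs0 x)
  have hD : 0 ≤ ∫ x, |p x - q x| ∂ν := integral_nonneg fun x => abs_nonneg _
  calc (∫ x, |p x - q x| ∂ν)^2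
      ≤ ((∫ x, (p x + q x) ∂ν) ^ (1/(2:ℝ)) * (∫ x, (p x - q x)^2/(p x + q x) ∂ν) ^ (1/(2:ℝ)))^2 := by
        apply pow_le_pow_left₀ hD hH
    _ = (∫ x, (p x + q x) ∂ν) * ∫ x, (p x - q x)^2/(p x + q x) ∂ν := by
        rw [mul_pow, ← Real.rpow_natCast (_ ^ (1/(2:ℝ))) 2, ← Real.rpow_natCast (_ ^ (1/(2:ℝ))) 2,
          ← Real.rpow_mul hS, ← Real.rpow_mul hJ]
        norm_num

lemma sub_one_le_mul_log {x : ℝ} (hx : 0 ≤ x) : x - 1 ≤ x * Real.log x := by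
  rcases eq_or_lt_of_le hx with h | h
  · simp [← h]
  · have h1 : Real.log x⁻¹ ≤ x⁻¹ - 1 := Real.log_le_sub_one_of_pos (by positivity)
    rw [Real.log_inv] at h1
    have h2 := mul_le_mul_of_nonneg_left h1 h.le
    rw [mul_sub, mul_inv_cancel₀ h.ne'] at h2
    nlinarith

theorem KL_midpoint {α : Type*} [MeasurableSpace α] (μ₀ μ₁ ν : Measure α)
    [IsProbabilityMeasure μ₀] [IsProbabilityMeasure μ₁] [IsProbabilityMeasure ν]
    (h₀ : μ₀ ≪ ν) (h₁ : μ₁ ≪ ν) (hi₀ : Integrable (llr μ₀ ν) μ₀)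
    (hi₁ : Integrable (llr μ₁ ν) μ₁) :
    KLdiv ((2:ℝ≥0∞)⁻¹ • (μ₀ + μ₁)) ν + ENNReal.ofReal (dTV μ₀ μ₁ ^ 2 / 2)
      ≤ 2⁻¹ * KLdiv μ₀ ν + 2⁻¹ * KLdiv μ₁ ν := by
  set m : Measure α := (2:ℝ≥0∞)⁻¹ • (μ₀ + μ₁) with hmdef
  have hmprob : IsProbabilityMeasure m := by
    constructor
    rw [hmdef, Measure.smul_apply, Measure.add_apply, measure_univ, measure_univ, smul_eq_mul]
    rw [one_add_one_eq_two, ENNReal.inv_mul_cancel (by norm_num) (by norm_num)]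
  have hm : m ≪ ν := Measure.smul_absolutelyContinuous.trans (h₀.add_left h₁)
  set p : α → ℝ := fun x => (μ₀.rnDeriv ν x).toReal with hpdef
  set q : α → ℝ := fun x => (μ₁.rnDeriv ν x).toReal with hqdef
  have hpm : Measurable p := (Measure.measurable_rnDeriv μ₀ ν).ennreal_toReal
  have hqm : Measurable q := (Measure.measurable_rnDeriv μ₁ ν).ennreal_toReal
  have hp0 : ∀ x, 0 ≤ p x := fun x => ENNReal.toReal_nonneg
  have hq0 : ∀ x, 0 ≤ q x := fun x => ENNReal.toReal_nonneg
  have hpi : Integrable p ν := Measure.integrable_toReal_rnDeriv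
  have hqi : Integrable q ν := Measure.integrable_toReal_rnDeriv
  have hip : ∫ x, p x ∂ν = 1 := by
    rw [hpdef, Measure.integral_toReal_rnDeriv h₀, probReal_univ]
  have hiq : ∫ x, q x ∂ν = 1 := by
    rw [hqdef, Measure.integral_toReal_rnDeriv h₁, probReal_univ]
  set mb : α → ℝ := fun x => (p x + q x)/2 with hmbdef
  have hmbm : Measurable mb := (hpm.add hqm).div_const 2
  have hmb0 : ∀ x, 0 ≤ mb x := fun x => by
    have := hp0 x; have := hq0 x
    rw [hmbdef]; positivity
  have hmbi : Integrable mb ν := (hpi.add hqi).div_const 2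
  have himb : ∫ x, mb x ∂ν = 1 := by
    rw [hmbdef]
    simp only [integral_div, integral_add hpi hqi, hip, hiq]
    norm_num
  -- rnDeriv of m
  have hr_ae : (fun x => (m.rnDeriv ν x).toReal) =ᵐ[ν] mb := by
    have hsm := Measure.rnDeriv_smul_left_of_ne_top (μ₀ + μ₁) ν
      (by norm_num : (2:ℝ≥0∞)⁻¹ ≠ ⊤)
    have hadd := Measure.rnDeriv_add μ₀ μ₁ ν
    filter_upwards [hsm, hadd, Measure.rnDeriv_lt_top μ₀ ν, Measure.rnDeriv_lt_top μ₁ ν]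
      with x hx1 hx2 hx3 hx4
    rw [hmdef] at *
    rw [hx1, Pi.smul_apply, hx2, Pi.add_apply, smul_eq_mul,
      ENNReal.toReal_mul, ENNReal.toReal_add hx3.ne hx4.ne]
    simp only [hmbdef, hpdef, hqdef]
    rw [show ((2:ℝ≥0∞)⁻¹).toReal = 1/2 by simp]
    ring
  -- integrability of entropies
  have hφp_int : Integrable (fun x => p x * Real.log (p x)) ν := by
    have := (integrable_rnDeriv_smul_iff h₀).2 hi₀
    simpa [llr_def, smul_eq_mul] using this
  have hφq_int : Integrable (fun x => q x * Real.log (q x)) ν := by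
    have := (integrable_rnDeriv_smul_iff h₁).2 hi₁
    simpa [llr_def, smul_eq_mul] using this
  have hφmb_bound : ∀ x, |mb x * Real.log (mb x)|
      ≤ |p x * Real.log (p x)|/2 + |q x * Real.log (q x)|/2 + 1 := by
    intro x
    have hub : mb x * Real.log (mb x)
        ≤ p x * Real.log (p x)/2 + q x * Real.log (q x)/2 := by
      have := Real.convexOn_mul_log.2 (Set.mem_Ici.2 (hp0 x)) (Set.mem_Ici.2 (hq0 x))
        (by norm_num : (0:ℝ) ≤ 1/2) (by norm_num : (0:ℝ) ≤ 1/2) (by norm_num)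
      simp only [smul_eq_mul] at this
      have hmb : mb x = 1/2 * p x + 1/2 * q x := by rw [hmbdef]; ring
      rw [hmb]
      linarith
    have hlb : -1 ≤ mb x * Real.log (mb x) := by
      have := sub_one_le_mul_log (hmb0 x)
      linarith [hmb0 x]
    rw [abs_le]
    constructor
    · have h1 : -(|p x * Real.log (p x)|/2 + |q x * Real.log (q x)|/2 + 1) ≤ -1 := by
        have := abs_nonneg (p x * Real.log (p x)); have := abs_nonneg (q x * Real.log (q x))
        linarith
      linarith
    · have := le_abs_self (p x * Real.log (p x))
      have := le_abs_self (q x * Real.log (q x))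
      linarith
  have hφmb_int : Integrable (fun x => mb x * Real.log (mb x)) ν := by
    refine Integrable.mono (g := fun x => |p x * Real.log (p x)|/2 + |q x * Real.log (q x)|/2 + 1)
      (((hφp_int.abs.div_const 2).add (hφq_int.abs.div_const 2)).add (integrable_const 1))
      (hmbm.mul (hmbm.log)).aestronglyMeasurable ?_
    filter_upwards with x
    rw [Real.norm_eq_abs, Real.norm_eq_abs]
    exact (hφmb_bound x).trans (le_abs_self _)
  -- Integrable llr m ν m and KLdiv m value
  have hRφ : (fun x => (m.rnDeriv ν x).toReal • llr m ν x)
      =ᵐ[ν] (fun x => mb x * Real.log (mb x)) := by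
    filter_upwards [hr_ae] with x hx
    simp only [llr_def, smul_eq_mul, hx]
  have hφR_int : Integrable (fun x => (m.rnDeriv ν x).toReal • llr m ν x) ν :=
    hφmb_int.congr hRφ.symm
  have him : Integrable (llr m ν) m := (integrable_rnDeriv_smul_iff hm).1 hφR_int
  have hKm : KLdiv m ν = ENNReal.ofReal (∫ x, mb x * Real.log (mb x) ∂ν) := by
    rw [KLdiv, if_pos ⟨hm, him⟩, ← integral_rnDeriv_smul hm,
      integral_congr_ae hRφ]
  have hK₀ : KLdiv μ₀ ν = ENNReal.ofReal (∫ x, p x * Real.log (p x) ∂ν) := by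
    rw [KLdiv, if_pos ⟨h₀, hi₀⟩, ← integral_rnDeriv_smul h₀]
    simp only [llr_def, smul_eq_mul, hpdef]
  have hK₁ : KLdiv μ₁ ν = ENNReal.ofReal (∫ x, q x * Real.log (q x) ∂ν) := by
    rw [KLdiv, if_pos ⟨h₁, hi₁⟩, ← integral_rnDeriv_smul h₁]
    simp only [llr_def, smul_eq_mul, hqdef]
  set a : ℝ := ∫ x, mb x * Real.log (mb x) ∂ν with hadef
  set b₀ : ℝ := ∫ x, p x * Real.log (p x) ∂ν with hb₀def
  set b₁ : ℝ := ∫ x, q x * Real.log (q x) ∂ν with hb₁def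
  have ha0 : 0 ≤ a := by
    have hmono : ∫ x, (mb x - 1) ∂ν ≤ a :=
      integral_mono (hmbi.sub (integrable_const 1)) hφmb_int
        (fun x => sub_one_le_mul_log (hmb0 x))
    rw [integral_sub hmbi (integrable_const 1), himb] at hmono
    simpa using hmono
  -- dTV bound
  set D : ℝ := ∫ x, |p x - q x| ∂ν with hDdef
  have hD0 : 0 ≤ D := integral_nonneg fun x => abs_nonneg _
  have hsub_int : Integrable (fun x => p x - q x) ν := hpi.sub hqi
  have habs_int : Integrable (fun x => |p x - q x|) ν := hsub_int.abs
  have hdTV_mem : ∀ r ∈ {r : ℝ | ∃ A : Set α, MeasurableSet A ∧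
      r = |(μ₀ A).toReal - (μ₁ A).toReal|}, r ≤ D/2 := by
    rintro r ⟨A, hA, rfl⟩
    have e₀ : (μ₀ A).toReal = ∫ x in A, p x ∂ν := (Measure.setIntegral_toReal_rnDeriv h₀ A).symm
    have e₁ : (μ₁ A).toReal = ∫ x in A, q x ∂ν := (Measure.setIntegral_toReal_rnDeriv h₁ A).symm
    rw [e₀, e₁, ← integral_sub hpi.integrableOn hqi.integrableOn]
    have hc : ∫ x in A, (p x - q x) ∂ν + ∫ x in Aᶜ, (p x - q x) ∂ν = 0 := by
      rw [integral_add_compl hA hsub_int, integral_sub hpi hqi, hip, hiq]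
      ring
    have hb1 : |∫ x in A, (p x - q x) ∂ν| ≤ ∫ x in A, |p x - q x| ∂ν := by
      simpa [Real.norm_eq_abs] using
        norm_integral_le_integral_norm (μ := ν.restrict A) (fun x => p x - q x)
    have hb2 : |∫ x in Aᶜ, (p x - q x) ∂ν| ≤ ∫ x in Aᶜ, |p x - q x| ∂ν := by
      simpa [Real.norm_eq_abs] using
        norm_integral_le_integral_norm (μ := ν.restrict Aᶜ) (fun x => p x - q x)
    have hsum : ∫ x in A, |p x - q x| ∂ν + ∫ x in Aᶜ, |p x - q x| ∂ν = D := by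
      rw [integral_add_compl hA habs_int]
    have heq : ∫ x in A, (p x - q x) ∂ν = - ∫ x in Aᶜ, (p x - q x) ∂ν := by linarith
    have : |∫ x in A, (p x - q x) ∂ν| = (|∫ x in A, (p x - q x) ∂ν| + |∫ x in Aᶜ, (p x - q x) ∂ν|)/2 := by
      rw [heq, abs_neg]
      ring
    rw [this]
    linarith
  have hdTV_nonempty : Set.Nonempty {r : ℝ | ∃ A : Set α, MeasurableSet A ∧
      r = |(μ₀ A).toReal - (μ₁ A).toReal|} :=
    ⟨0, ∅, MeasurableSet.empty, by simp⟩
  have hdTV_le : dTV μ₀ μ₁ ≤ D/2 := csSup_le hdTV_nonempty hdTV_mem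
  have hdTV_0 : 0 ≤ dTV μ₀ μ₁ :=
    le_csSup ⟨D/2, hdTV_mem⟩ ⟨∅, MeasurableSet.empty, by simp⟩
  -- Cauchy-Schwarz
  set J : ℝ := ∫ x, (p x - q x)^2/(p x + q x) ∂ν with hJdef
  have hCS : D^2 ≤ 2 * J := by
    have := CauchySchwarz_div ν hpm hqm hp0 hq0 hpi hqi
    rw [integral_add hpi hqi, hip, hiq] at this
    rw [hDdef, hJdef]
    linarith
  -- pointwise convexity gap
  have hφsum_int : Integrable (fun x => p x * Real.log (p x) + q x * Real.log (q x)) ν :=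
    hφp_int.add hφq_int
  have hφmb2_int : Integrable (fun x => 2 * (mb x * Real.log (mb x))) ν :=
    hφmb_int.const_mul 2
  have hgap_int : Integrable (fun x => p x * Real.log (p x) + q x * Real.log (q x)
      - 2 * (mb x * Real.log (mb x))) ν :=
    hφsum_int.sub hφmb2_int
  have hJhalf_int : Integrable (fun x => (p x - q x)^2/(p x + q x)/2) ν := by
    have hgi : Integrable (fun x => (p x - q x)^2/(p x + q x)) ν := by
      refine (hpi.add hqi).mono
        (((hpm.sub hqm).pow_const 2).div (hpm.add hqm)).aestronglyMeasurable ?_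
      filter_upwards with x
      have hs0 : 0 ≤ p x + q x := add_nonneg (hp0 x) (hq0 x)
      rw [Real.norm_of_nonneg (div_nonneg (sq_nonneg _) hs0), Pi.add_apply,
        Real.norm_of_nonneg hs0]
      rcases eq_or_lt_of_le hs0 with h | h
      · rw [← h]; simp
      · rw [div_le_iff₀ h]
        nlinarith [hp0 x, hq0 x]
    exact hgi.div_const 2
  have hJgap : J/2 ≤ b₀ + b₁ - 2*a := by
    have hmono := integral_mono hJhalf_int hgap_int
      (fun x => phi_pointwise (hp0 x) (hq0 x))
    rw [integral_sub hφsum_int hφmb2_int,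
      integral_add hφp_int hφq_int, integral_const_mul] at hmono
    simp only [integral_div] at hmono
    rw [hJdef]
    exact hmono
  -- combine reals
  have hreal : a + dTV μ₀ μ₁ ^ 2 / 2 ≤ (b₀ + b₁)/2 := by
    nlinarith [hdTV_le, hdTV_0, hCS, hJgap, hD0]
  -- conclude in ℝ≥0∞
  rw [hKm, hK₀, hK₁]
  rw [← ENNReal.ofReal_add ha0 (by positivity)]
  calc ENNReal.ofReal (a + dTV μ₀ μ₁ ^ 2 / 2)
      ≤ ENNReal.ofReal ((b₀ + b₁)/2) := ENNReal.ofReal_le_ofReal hreal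
    _ = ENNReal.ofReal (b₀/2 + b₁/2) := by rw [add_div]
    _ ≤ ENNReal.ofReal (b₀/2) + ENNReal.ofReal (b₁/2) := ENNReal.ofReal_add_le
    _ = 2⁻¹ * ENNReal.ofReal b₀ + 2⁻¹ * ENNReal.ofReal b₁ := by
        rw [ENNReal.ofReal_div_of_pos two_pos, ENNReal.ofReal_div_of_pos two_pos]
        simp [ENNReal.div_eq_inv_mul]

end Main

/-- The entropic optimal transport objective is strongly convex at midpoints with respect
to total variation: `F((γ₀+γ₁)/2) ≤ ½F(γ₀) + ½F(γ₁) − (β/2)·d_TV(γ₀,γ₁)²`. -/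
theorem entOT_strong_convexity {X : Type*} [MeasurableSpace X] [PseudoMetricSpace X]
    (β : ℝ) (hβ : 0 < β)
    (P Q : Measure X) [IsProbabilityMeasure P] [IsProbabilityMeasure Q]
    (γ₀ γ₁ : Measure (X × X)) (h₀ : IsCoupling γ₀ P Q) (h₁ : IsCoupling γ₁ P Q)
    (hF₀ : entOTObj β P Q γ₀ < ⊤) (hF₁ : entOTObj β P Q γ₁ < ⊤) :
    entOTObj β P Q ((2 : ℝ≥0∞)⁻¹ • (γ₀ + γ₁))
        + ENNReal.ofReal (β / 2 * dTV γ₀ γ₁ ^ 2)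
      ≤ 2⁻¹ * entOTObj β P Q γ₀ + 2⁻¹ * entOTObj β P Q γ₁ := by
  haveI hγ₀prob : IsProbabilityMeasure γ₀ := h₀.1
  haveI hγ₁prob : IsProbabilityMeasure γ₁ := h₁.1
  set ν : Measure (X × X) := P.prod Q with hν
  have hβ' : ENNReal.ofReal β ≠ 0 := (ENNReal.ofReal_pos.2 hβ).ne'
  have hcond₀ : γ₀ ≪ ν ∧ Integrable (llr γ₀ ν) γ₀ := by
    by_contra hc
    rw [entOTObj] at hF₀
    have h2 := (ENNReal.add_lt_top.1 hF₀).2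
    rw [KLdiv, if_neg hc, ENNReal.mul_top hβ'] at h2
    exact lt_irrefl ⊤ h2
  have hcond₁ : γ₁ ≪ ν ∧ Integrable (llr γ₁ ν) γ₁ := by
    by_contra hc
    rw [entOTObj] at hF₁
    have h2 := (ENNReal.add_lt_top.1 hF₁).2
    rw [KLdiv, if_neg hc, ENNReal.mul_top hβ'] at h2
    exact lt_irrefl ⊤ h2
  have hmain := KL_midpoint γ₀ γ₁ ν hcond₀.1 hcond₁.1 hcond₀.2 hcond₁.2
  have hlin : ∫⁻ x, edist x.1 x.2 ∂((2:ℝ≥0∞)⁻¹ • (γ₀ + γ₁))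
      = 2⁻¹ * ∫⁻ x, edist x.1 x.2 ∂γ₀ + 2⁻¹ * ∫⁻ x, edist x.1 x.2 ∂γ₁ := by
    rw [lintegral_smul_measure, lintegral_add_measure, smul_eq_mul, mul_add]
  have hofReal : ENNReal.ofReal (β / 2 * dTV γ₀ γ₁ ^ 2)
      = ENNReal.ofReal β * ENNReal.ofReal (dTV γ₀ γ₁ ^ 2 / 2) := by
    rw [← ENNReal.ofReal_mul hβ.le]
    ring_nf
  have hstep : ENNReal.ofReal β * KLdiv ((2:ℝ≥0∞)⁻¹ • (γ₀ + γ₁)) ν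
        + ENNReal.ofReal β * ENNReal.ofReal (dTV γ₀ γ₁ ^ 2 / 2)
      ≤ 2⁻¹ * (ENNReal.ofReal β * KLdiv γ₀ ν) + 2⁻¹ * (ENNReal.ofReal β * KLdiv γ₁ ν) := by
    rw [← mul_add]
    calc ENNReal.ofReal β * (KLdiv ((2:ℝ≥0∞)⁻¹ • (γ₀ + γ₁)) ν
          + ENNReal.ofReal (dTV γ₀ γ₁ ^ 2 / 2))
        ≤ ENNReal.ofReal β * (2⁻¹ * KLdiv γ₀ ν + 2⁻¹ * KLdiv γ₁ ν) :=
          mul_le_mul' le_rfl hmain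
      _ = 2⁻¹ * (ENNReal.ofReal β * KLdiv γ₀ ν) + 2⁻¹ * (ENNReal.ofReal β * KLdiv γ₁ ν) := by
          ring
  rw [entOTObj, entOTObj, entOTObj, hlin, hofReal]
  calc 2⁻¹ * (∫⁻ x, edist x.1 x.2 ∂γ₀) + 2⁻¹ * (∫⁻ x, edist x.1 x.2 ∂γ₁)
        + ENNReal.ofReal β * KLdiv ((2:ℝ≥0∞)⁻¹ • (γ₀ + γ₁)) ν
        + ENNReal.ofReal β * ENNReal.ofReal (dTV γ₀ γ₁ ^ 2 / 2)
      = (2⁻¹ * (∫⁻ x, edist x.1 x.2 ∂γ₀) + 2⁻¹ * (∫⁻ x, edist x.1 x.2 ∂γ₁))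
        + (ENNReal.ofReal β * KLdiv ((2:ℝ≥0∞)⁻¹ • (γ₀ + γ₁)) ν
          + ENNReal.ofReal β * ENNReal.ofReal (dTV γ₀ γ₁ ^ 2 / 2)) := by ring
    _ ≤ (2⁻¹ * (∫⁻ x, edist x.1 x.2 ∂γ₀) + 2⁻¹ * (∫⁻ x, edist x.1 x.2 ∂γ₁))
        + (2⁻¹ * (ENNReal.ofReal β * KLdiv γ₀ ν) + 2⁻¹ * (ENNReal.ofReal β * KLdiv γ₁ ν)) :=
          add_le_add_right hstep _
    _ = 2⁻¹ * ((∫⁻ x, edist x.1 x.2 ∂γ₀) + ENNReal.ofReal β * KLdiv γ₀ ν)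
        + 2⁻¹ * ((∫⁻ x, edist x.1 x.2 ∂γ₁) + ENNReal.ofReal β * KLdiv γ₁ ν) := by ring

end
end

section
/- Let P and Q be Borel probability measures on complete separable metric spaces, let β > 0, and suppose γ* is a coupling of P and Q attaining the (finite) infimum defining the entropic optimal transport cost W_β(P, Q) = inf_γ { ∫ ρ(x, x') dγ(x, x') + β·KL(γ ‖ P ⊗ Q) }. Then supp(γ*) = supp(P) × supp(Q). -/
open MeasureTheory
open scoped ENNReal

noncomputable section

/-- Entropic optimal transport cost `W_β(P,Q)`. -/
def Wbeta {X : Type*} [MeasurableSpace X] [PseudoMetricSpace X] (β : ℝ)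
    (P Q : Measure X) : ℝ≥0∞ :=
  ⨅ γ ∈ {γ : Measure (X × X) | IsCoupling γ P Q}, entOTObj β P Q γ

/-- Support of a Borel measure on a topological space: the set of points all of whose
open neighborhoods have positive measure. -/
def msupp {X : Type*} [TopologicalSpace X] [MeasurableSpace X] (μ : Measure X) : Set X :=
  {x | ∀ U : Set X, IsOpen U → x ∈ U → 0 < μ U}

section AuxPrivate
open Real Set
lemma phi_ge (x : ℝ) (hx : 0 ≤ x) : x - 1 ≤ x * Real.log x := by
  rcases eq_or_lt_of_le hx with h | h
  · simp [← h]
  · have h1 : Real.log x⁻¹ ≤ x⁻¹ - 1 := Real.log_le_sub_one_of_pos (by positivity)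
    rw [Real.log_inv] at h1
    have h2 : x * x⁻¹ = 1 := mul_inv_cancel₀ h.ne'
    nlinarith [h1, h, h2]

lemma phi_ge_neg_one (x : ℝ) (hx : 0 ≤ x) : -1 ≤ x * Real.log x := by
  have := phi_ge x hx; linarith

lemma phi_le_max (t T : ℝ) (ht : 0 ≤ t) (hT : t ≤ T) :
    t * Real.log t ≤ max 0 (T * Real.log T) := by
  rcases eq_or_lt_of_le ht with h | h
  · simp [← h]
  · have hlog : Real.log t ≤ Real.log T := Real.log_le_log h hT
    have h1 : t * Real.log t ≤ t * Real.log T := by nlinarith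
    rcases le_or_gt 0 (Real.log T) with hp | hn
    · have : t * Real.log T ≤ T * Real.log T := by nlinarith
      exact h1.trans (this.trans (le_max_right _ _))
    · have : t * Real.log T ≤ 0 := by nlinarith
      exact h1.trans (this.trans (le_max_left _ _))

lemma abs_phi_le (t T : ℝ) (ht : 0 ≤ t) (hT : t ≤ T) :
    |t * Real.log t| ≤ 1 + max 0 (T * Real.log T) := by
  rw [abs_le]
  constructor
  · have := phi_ge_neg_one t ht
    have h0 : (0:ℝ) ≤ max 0 (T * Real.log T) := le_max_left _ _
    linarith
  · have := phi_le_max t T ht hT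
    linarith

lemma max_phi_add_le (u v : ℝ) (hu : 0 ≤ u) (hv : 0 ≤ v) :
    max 0 ((u + v) * Real.log (u + v)) ≤
      2 * (u + v) + 2 * |u * Real.log u| + 2 * |v * Real.log v| := by
  set w := max u v with hw
  have hw0 : 0 ≤ w := le_trans hu (le_max_left _ _)
  have huv : u + v ≤ 2 * w := by
    rcases max_cases u v with ⟨h1, h2⟩ | ⟨h1, h2⟩ <;> simp [hw, h1] <;> linarith
  have hwle : w ≤ u + v := by
    rcases max_cases u v with ⟨h1, h2⟩ | ⟨h1, h2⟩ <;> simp [hw, h1] <;> linarith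
  have hbig : 2 * w * Real.log (2 * w) ≤
      2 * (u + v) + 2 * |u * Real.log u| + 2 * |v * Real.log v| := by
    rcases eq_or_lt_of_le hw0 with h0 | h0
    · simp [← h0]; positivity
    · have hlog : Real.log (2 * w) = Real.log 2 + Real.log w :=
        Real.log_mul (by norm_num) h0.ne'
      have hl2 : Real.log 2 ≤ 1 := by
        have := Real.log_le_sub_one_of_pos (by norm_num : (0:ℝ) < 2); linarith
      have hphiw : w * Real.log w ≤ |u * Real.log u| + |v * Real.log v| := by
        rcases max_cases u v with ⟨h1, h2⟩ | ⟨h1, h2⟩ <;> rw [hw, h1]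
        · exact le_trans (le_abs_self _) (by simp [abs_nonneg]; positivity)
        · exact le_trans (le_abs_self _) (by
            have := abs_nonneg (u * Real.log u); linarith)
      have : 2 * w * Real.log (2 * w) = 2 * (Real.log 2) * w + 2 * (w * Real.log w) := by
        rw [hlog]; ring
      rw [this]
      have h2w : 2 * Real.log 2 * w ≤ 2 * (u + v) := by nlinarith
      linarith
  have h1 : (u + v) * Real.log (u + v) ≤ max 0 (2 * w * Real.log (2 * w)) :=
    phi_le_max _ _ (by linarith) huv
  have hR : (0:ℝ) ≤ 2 * (u + v) + 2 * |u * Real.log u| + 2 * |v * Real.log v| := by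
    positivity
  refine max_le hR (h1.trans (max_le hR hbig))

lemma phi_mul (t u : ℝ) (ht : 0 < t) (hu : 0 ≤ u) :
    (t * u) * Real.log (t * u) = (t * Real.log t) * u + t * (u * Real.log u) := by
  rcases eq_or_lt_of_le hu with h | h
  · simp [← h]
  · rw [Real.log_mul ht.ne' h.ne']; ring


lemma integral_phi_nonneg {α : Type*} [MeasurableSpace α] (μ : Measure α)
    [IsProbabilityMeasure μ] (F : α → ℝ) (hF : ∀ x, 0 ≤ F x)
    (h1 : ∫ x, F x ∂μ = 1) (hFi : Integrable F μ)
    (hφi : Integrable (fun x => F x * Real.log (F x)) μ) :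
    0 ≤ ∫ x, F x * Real.log (F x) ∂μ := by
  have hj := Real.convexOn_mul_log.map_integral_le (μ := μ) (f := F)
    Real.continuous_mul_log.continuousOn isClosed_Ici
    (Filter.Eventually.of_forall fun x => hF x) hFi
    hφi
  rw [h1] at hj
  simpa using hj

lemma rnDeriv_mono_of_le {α : Type*} [MeasurableSpace α] {μ ν ξ : Measure α}
    [IsFiniteMeasure μ] [IsFiniteMeasure ν] [SigmaFinite ξ] (h : μ ≤ ν) :
    μ.rnDeriv ξ ≤ᵐ[ξ] ν.rnDeriv ξ := by
  haveI : IsFiniteMeasure (ν - μ) :=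
    ⟨lt_of_le_of_lt (Measure.sub_le (s := Set.univ)) (measure_lt_top ν _)⟩
  have hsum : ν - μ + μ = ν := Measure.sub_add_cancel_of_le h
  have hadd := Measure.rnDeriv_add' (ν - μ) μ ξ
  rw [hsum] at hadd
  filter_upwards [hadd] with x hx
  rw [hx]
  exact le_add_self


lemma exists_good_coupling {X : Type*} [MetricSpace X] [MeasurableSpace X] [BorelSpace X]
    [SecondCountableTopology X]
    (P Q : Measure X) [IsProbabilityMeasure P] [IsProbabilityMeasure Q]
    (γ : Measure (X × X)) [IsProbabilityMeasure γ]
    (h1 : γ.map Prod.fst = P) (h2 : γ.map Prod.snd = Q)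
    (hcost : ∫⁻ p, edist p.1 p.2 ∂γ ≠ ⊤)
    (x y : X) (r : ℝ)
    (hU0 : P (Metric.ball x r) ≠ 0) (hV0 : Q (Metric.ball y r) ≠ 0)
    (hγUV : γ (Metric.ball x r ×ˢ Metric.ball y r) = 0) :
    ∃ (Γ : Measure (X × X)) (M : ℝ≥0∞), IsProbabilityMeasure Γ ∧
      Γ.map Prod.fst = P ∧ Γ.map Prod.snd = Q ∧
      M ≠ ⊤ ∧ Γ ≤ γ + M • (P.prod Q) ∧
      (∫⁻ p, edist p.1 p.2 ∂Γ) ≠ ⊤ ∧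
      min (P (Metric.ball x r)) (Q (Metric.ball y r))
        ≤ Γ (Metric.ball x r ×ˢ Metric.ball y r) := by
  classical
  set U : Set X := Metric.ball x r with hU
  set V : Set X := Metric.ball y r with hV
  have hUm : MeasurableSet U := measurableSet_ball
  have hVm : MeasurableSet V := measurableSet_ball
  set a : ℝ≥0∞ := P U with ha
  set b : ℝ≥0∞ := Q V with hb
  have haT : a ≠ ⊤ := measure_ne_top _ _
  have hbT : b ≠ ⊤ := measure_ne_top _ _
  -- marginal evaluations
  have hfst : ∀ s : Set X, MeasurableSet s → γ (s ×ˢ (univ : Set X)) = P s := by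
    intro s hs
    rw [← h1, Measure.map_apply measurable_fst hs, prod_univ]
  have hsnd : ∀ t : Set X, MeasurableSet t → γ ((univ : Set X) ×ˢ t) = Q t := by
    intro t ht
    rw [← h2, Measure.map_apply measurable_snd ht, univ_prod]
  have hsetA : (U ×ˢ (univ : Set X)) \ (U ×ˢ V) = U ×ˢ Vᶜ := by
    ext ⟨p, q⟩; simp (config := {contextual := true}) [and_comm]
  have hsetB : ((univ : Set X) ×ˢ V) \ (U ×ˢ V) = Uᶜ ×ˢ V := by
    ext ⟨p, q⟩; simp (config := {contextual := true}) [and_comm]; tauto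
  have hAuniv : γ (U ×ˢ Vᶜ) = a := by
    rw [← hsetA, measure_diff_null hγUV, hfst U hUm]
  have hBuniv : γ (Uᶜ ×ˢ V) = b := by
    rw [← hsetB, measure_diff_null hγUV, hsnd V hVm]
  set A : Measure (X × X) := γ.restrict (U ×ˢ Vᶜ) with hA
  set B : Measure (X × X) := γ.restrict (Uᶜ ×ˢ V) with hB
  set R : Measure (X × X) := γ.restrict ((U ×ˢ Vᶜ ∪ Uᶜ ×ˢ V)ᶜ) with hR
  have hABm : MeasurableSet (U ×ˢ Vᶜ) := hUm.prod hVm.compl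
  have hBBm : MeasurableSet (Uᶜ ×ˢ V) := hUm.compl.prod hVm
  have hABdisj : Disjoint (U ×ˢ Vᶜ) (Uᶜ ×ˢ V) := by
    rw [Set.disjoint_left]
    rintro ⟨p, q⟩ ⟨hp, _⟩ ⟨hp', _⟩
    exact hp' hp
  have hsplit : A + B + R = γ := by
    rw [hA, hB, hR, ← Measure.restrict_union hABdisj hBBm,
      Measure.restrict_add_restrict_compl (hABm.union hBBm)]
  set μ1 : Measure X := A.map Prod.fst with hμ1
  set μ2 : Measure X := A.map Prod.snd with hμ2
  set ν1 : Measure X := B.map Prod.fst with hν1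
  set ν2 : Measure X := B.map Prod.snd with hν2
  haveI : IsFiniteMeasure A := inferInstance
  haveI : IsFiniteMeasure B := inferInstance
  haveI : IsFiniteMeasure μ1 := Measure.isFiniteMeasure_map A Prod.fst
  haveI : IsFiniteMeasure μ2 := Measure.isFiniteMeasure_map A Prod.snd
  haveI : IsFiniteMeasure ν1 := Measure.isFiniteMeasure_map B Prod.fst
  haveI : IsFiniteMeasure ν2 := Measure.isFiniteMeasure_map B Prod.snd
  have hμ1univ : μ1 univ = a := by
    rw [hμ1, Measure.map_apply measurable_fst MeasurableSet.univ]
    simpa [hA, Measure.restrict_apply MeasurableSet.univ] using hAuniv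
  have hμ2univ : μ2 univ = a := by
    rw [hμ2, Measure.map_apply measurable_snd MeasurableSet.univ]
    simpa [hA, Measure.restrict_apply MeasurableSet.univ] using hAuniv
  have hν1univ : ν1 univ = b := by
    rw [hν1, Measure.map_apply measurable_fst MeasurableSet.univ]
    simpa [hB, Measure.restrict_apply MeasurableSet.univ] using hBuniv
  have hν2univ : ν2 univ = b := by
    rw [hν2, Measure.map_apply measurable_snd MeasurableSet.univ]
    simpa [hB, Measure.restrict_apply MeasurableSet.univ] using hBuniv
  have hμ1U : μ1 U = a := by
    rw [hμ1, Measure.map_apply measurable_fst hUm, hA,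
      Measure.restrict_apply (measurable_fst hUm)]
    have : Prod.fst ⁻¹' U ∩ U ×ˢ Vᶜ = U ×ˢ Vᶜ :=
      inter_eq_self_of_subset_right (fun p hp => hp.1)
    rw [this, hAuniv]
  have hν2V : ν2 V = b := by
    rw [hν2, Measure.map_apply measurable_snd hVm, hB,
      Measure.restrict_apply (measurable_snd hVm)]
    have : Prod.snd ⁻¹' V ∩ Uᶜ ×ˢ V = Uᶜ ×ˢ V :=
      inter_eq_self_of_subset_right (fun p hp => hp.2)
    rw [this, hBuniv]
  have hμ1P : μ1 ≤ P := by
    refine Measure.le_intro fun s hs _ => ?_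
    rw [hμ1, Measure.map_apply measurable_fst hs, hA,
      Measure.restrict_apply (measurable_fst hs), ← hfst s hs]
    exact measure_mono (fun p hp => ⟨hp.1, trivial⟩)
  have hν1P : ν1 ≤ P := by
    refine Measure.le_intro fun s hs _ => ?_
    rw [hν1, Measure.map_apply measurable_fst hs, hB,
      Measure.restrict_apply (measurable_fst hs), ← hfst s hs]
    exact measure_mono (fun p hp => ⟨hp.1, trivial⟩)
  have hμ2Q : μ2 ≤ Q := by
    refine Measure.le_intro fun s hs _ => ?_
    rw [hμ2, Measure.map_apply measurable_snd hs, hA,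
      Measure.restrict_apply (measurable_snd hs), ← hsnd s hs]
    exact measure_mono (fun p hp => ⟨trivial, hp.1⟩)
  have hν2Q : ν2 ≤ Q := by
    refine Measure.le_intro fun s hs _ => ?_
    rw [hν2, Measure.map_apply measurable_snd hs, hB,
      Measure.restrict_apply (measurable_snd hs), ← hsnd s hs]
    exact measure_mono (fun p hp => ⟨trivial, hp.1⟩)
  -- scalars
  have ha0' : a ≠ 0 := hU0
  have hb0' : b ≠ 0 := hV0
  set c : ℝ≥0∞ := min a b with hc
  have hc0 : c ≠ 0 := by
    simp only [hc, ne_eq, min_eq_iff]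
    rintro (⟨h, -⟩ | ⟨h, -⟩) <;> [exact ha0' h; exact hb0' h]
  have hcT : c ≠ ⊤ := ne_top_of_le_ne_top haT (min_le_left _ _)
  have hab0 : a * b ≠ 0 := mul_ne_zero ha0' hb0'
  have habT : a * b ≠ ⊤ := ENNReal.mul_ne_top haT hbT
  set k : ℝ≥0∞ := c / (a * b) with hk
  have hkT : k ≠ ⊤ := (ENNReal.div_lt_top hcT hab0).ne
  have hinvab : (a * b)⁻¹ = a⁻¹ * b⁻¹ := ENNReal.mul_inv (Or.inl ha0') (Or.inl haT)
  have hkb : k * b = c / a := by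
    rw [hk, div_eq_mul_inv, hinvab, mul_assoc, mul_assoc,
      ENNReal.inv_mul_cancel hb0' hbT, mul_one, ← div_eq_mul_inv]
  have hka : k * a = c / b := by
    rw [hk, div_eq_mul_inv, hinvab, mul_comm a⁻¹ b⁻¹, mul_assoc, mul_assoc,
      ENNReal.inv_mul_cancel ha0' haT, mul_one, ← div_eq_mul_inv]
  have hcaa : c / a ≤ 1 := by
    calc c / a ≤ a / a := ENNReal.div_le_div_right (min_le_left _ _) a
    _ = 1 := ENNReal.div_self ha0' haT
  have hcbb : c / b ≤ 1 := by
    calc c / b ≤ b / b := ENNReal.div_le_div_right (min_le_right _ _) b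
    _ = 1 := ENNReal.div_self hb0' hbT
  set Γ : Measure (X × X) :=
    (1 - c / a) • A + (1 - c / b) • B + R + k • (μ1.prod ν2) + k • (ν1.prod μ2) with hΓdef
  -- marginal sums of the decomposition
  have hPsum : μ1 + ν1 + R.map Prod.fst = P := by
    have h := congrArg (fun m : Measure (X × X) => m.map Prod.fst) hsplit
    rw [Measure.map_add _ _ measurable_fst, Measure.map_add _ _ measurable_fst, h1] at h
    exact h
  have hQsum : μ2 + ν2 + R.map Prod.snd = Q := by
    have h := congrArg (fun m : Measure (X × X) => m.map Prod.snd) hsplit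
    rw [Measure.map_add _ _ measurable_snd, Measure.map_add _ _ measurable_snd, h2] at h
    exact h
  have hΓ1 : Γ.map Prod.fst = P := by
    rw [hΓdef, Measure.map_add _ _ measurable_fst, Measure.map_add _ _ measurable_fst,
      Measure.map_add _ _ measurable_fst, Measure.map_add _ _ measurable_fst,
      Measure.map_smul, Measure.map_smul, Measure.map_smul, Measure.map_smul,
      Measure.map_fst_prod, Measure.map_fst_prod, hν2univ, hμ2univ,
      smul_smul, smul_smul, hkb, hka]
    calc (1 - c/a) • μ1 + (1 - c/b) • ν1 + R.map Prod.fst + (c/a) • μ1 + (c/b) • ν1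
        = ((1 - c/a) • μ1 + (c/a) • μ1) + ((1 - c/b) • ν1 + (c/b) • ν1)
            + R.map Prod.fst := by abel
      _ = μ1 + ν1 + R.map Prod.fst := by
            rw [← add_smul, ← add_smul, tsub_add_cancel_of_le hcaa,
              tsub_add_cancel_of_le hcbb, one_smul, one_smul]
      _ = P := hPsum
  have hΓ2 : Γ.map Prod.snd = Q := by
    rw [hΓdef, Measure.map_add _ _ measurable_snd, Measure.map_add _ _ measurable_snd,
      Measure.map_add _ _ measurable_snd, Measure.map_add _ _ measurable_snd,
      Measure.map_smul, Measure.map_smul, Measure.map_smul, Measure.map_smul,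
      Measure.map_snd_prod, Measure.map_snd_prod, hμ1univ, hν1univ,
      smul_smul, smul_smul, hka, hkb]
    calc (1 - c/a) • μ2 + (1 - c/b) • ν2 + R.map Prod.snd + (c/b) • ν2 + (c/a) • μ2
        = ((1 - c/a) • μ2 + (c/a) • μ2) + ((1 - c/b) • ν2 + (c/b) • ν2)
            + R.map Prod.snd := by abel
      _ = μ2 + ν2 + R.map Prod.snd := by
            rw [← add_smul, ← add_smul, tsub_add_cancel_of_le hcaa,
              tsub_add_cancel_of_le hcbb, one_smul, one_smul]
      _ = Q := hQsum
  have hΓprob : IsProbabilityMeasure Γ := by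
    constructor
    have h := congrArg (fun m : Measure X => m univ) hΓ1
    simp only [Measure.map_apply measurable_fst MeasurableSet.univ, Set.preimage_univ] at h
    rw [h]; exact measure_univ
  -- domination
  have hprodle1 : ∀ s : Set (X × X), MeasurableSet s → (μ1.prod ν2) s ≤ (P.prod Q) s := by
    intro s hs
    rw [Measure.prod_apply hs, Measure.prod_apply hs]
    calc ∫⁻ z, ν2 (Prod.mk z ⁻¹' s) ∂μ1 ≤ ∫⁻ z, Q (Prod.mk z ⁻¹' s) ∂μ1 :=
          lintegral_mono fun z => Measure.le_iff'.1 hν2Q _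
      _ ≤ ∫⁻ z, Q (Prod.mk z ⁻¹' s) ∂P := lintegral_mono' hμ1P le_rfl
  have hprodle2 : ∀ s : Set (X × X), MeasurableSet s → (ν1.prod μ2) s ≤ (P.prod Q) s := by
    intro s hs
    rw [Measure.prod_apply hs, Measure.prod_apply hs]
    calc ∫⁻ z, μ2 (Prod.mk z ⁻¹' s) ∂ν1 ≤ ∫⁻ z, Q (Prod.mk z ⁻¹' s) ∂ν1 :=
          lintegral_mono fun z => Measure.le_iff'.1 hμ2Q _
      _ ≤ ∫⁻ z, Q (Prod.mk z ⁻¹' s) ∂P := lintegral_mono' hν1P le_rfl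
  have hΓle : Γ ≤ γ + (k + k) • (P.prod Q) := by
    refine Measure.le_intro fun s hs _ => ?_
    have hγs : A s + B s + R s = γ s := by
      have h := congrArg (fun m : Measure (X × X) => m s) hsplit
      simpa using h
    simp only [hΓdef, Measure.add_apply, Measure.smul_apply, smul_eq_mul]
    have e1 : (1 - c/a) * A s ≤ A s := mul_le_of_le_one_left zero_le tsub_le_self
    have e2 : (1 - c/b) * B s ≤ B s := mul_le_of_le_one_left zero_le tsub_le_self
    have e3 : k * (μ1.prod ν2) s ≤ k * (P.prod Q) s :=
      by gcongr
    have e4 : k * (ν1.prod μ2) s ≤ k * (P.prod Q) s :=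
      by gcongr
    calc (1 - c/a) * A s + (1 - c/b) * B s + R s + k * (μ1.prod ν2) s
          + k * (ν1.prod μ2) s
        ≤ A s + B s + R s + k * (P.prod Q) s + k * (P.prod Q) s := by
          gcongr
      _ = γ s + (k + k) * (P.prod Q) s := by rw [hγs]; ring
  -- cost bounds
  have hedm : Measurable fun p : X × X => edist p.1 p.2 := measurable_edist
  have hmeas1 : Measurable fun z : X => edist z y := measurable_id.edist measurable_const
  have hmeas2 : Measurable fun z : X => edist x z := measurable_const.edist measurable_id
  have hcostA : ∫⁻ p, edist p.1 p.2 ∂A ≤ ∫⁻ p, edist p.1 p.2 ∂γ :=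
    lintegral_mono' Measure.restrict_le_self le_rfl
  have hcostB : ∫⁻ p, edist p.1 p.2 ∂B ≤ ∫⁻ p, edist p.1 p.2 ∂γ :=
    lintegral_mono' Measure.restrict_le_self le_rfl
  have hcostR : ∫⁻ p, edist p.1 p.2 ∂(R) ≤ ∫⁻ p, edist p.1 p.2 ∂γ :=
    lintegral_mono' Measure.restrict_le_self le_rfl
  have hμ1Uc : μ1 Uᶜ = 0 := by
    have h := measure_compl hUm (by rw [hμ1U]; exact haT)
    rw [hμ1U, hμ1univ] at h
    rw [h, tsub_self]
  have hν2Vc : ν2 Vᶜ = 0 := by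
    have h := measure_compl hVm (by rw [hν2V]; exact hbT)
    rw [hν2V, hν2univ] at h
    rw [h, tsub_self]
  have haemem : ∀ᵐ p ∂(μ1.prod ν2), p ∈ U ×ˢ V := by
    rw [ae_iff]
    have hcompl : {p : X × X | ¬ p ∈ U ×ˢ V} = (U ×ˢ V)ᶜ := rfl
    rw [hcompl, compl_prod_eq_union]
    refine measure_union_null ?_ ?_
    · rw [Measure.prod_prod, hμ1Uc, zero_mul]
    · rw [Measure.prod_prod, hν2Vc, mul_zero]
  have hball : ∀ {z w : X} {s : ℝ}, z ∈ Metric.ball w s → edist z w ≤ ENNReal.ofReal s := by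
    intro z w s hz
    rw [edist_dist]
    exact ENNReal.ofReal_le_ofReal (le_of_lt (Metric.mem_ball.1 hz))
  have hcostP1 : ∫⁻ p, edist p.1 p.2 ∂(μ1.prod ν2) ≠ ⊤ := by
    have hbound : ∀ᵐ p ∂(μ1.prod ν2),
        edist p.1 p.2 ≤ ENNReal.ofReal r + edist x y + ENNReal.ofReal r := by
      filter_upwards [haemem] with p hp
      calc edist p.1 p.2 ≤ edist p.1 x + edist x y + edist y p.2 :=
            edist_triangle4 _ _ _ _
        _ ≤ ENNReal.ofReal r + edist x y + ENNReal.ofReal r := by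
            gcongr
            · exact hball hp.1
            · rw [edist_comm]; exact hball hp.2
    have hle : ∫⁻ p, edist p.1 p.2 ∂(μ1.prod ν2)
        ≤ (ENNReal.ofReal r + edist x y + ENNReal.ofReal r) * (μ1.prod ν2) univ := by
      calc ∫⁻ p, edist p.1 p.2 ∂(μ1.prod ν2)
          ≤ ∫⁻ _, ENNReal.ofReal r + edist x y + ENNReal.ofReal r ∂(μ1.prod ν2) :=
            lintegral_mono_ae hbound
        _ = (ENNReal.ofReal r + edist x y + ENNReal.ofReal r) * (μ1.prod ν2) univ :=
            lintegral_const _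
    exact ne_top_of_le_ne_top (ENNReal.mul_ne_top (ENNReal.add_ne_top.2
      ⟨ENNReal.add_ne_top.2 ⟨ENNReal.ofReal_ne_top, edist_ne_top x y⟩,
        ENNReal.ofReal_ne_top⟩) (measure_ne_top _ _)) hle
  have haeB : ∀ᵐ p ∂B, p ∈ Uᶜ ×ˢ V := by
    rw [ae_iff]
    have hcompl : {p : X × X | ¬ p ∈ Uᶜ ×ˢ V} = (Uᶜ ×ˢ V)ᶜ := rfl
    rw [hcompl, hB, Measure.restrict_apply (hBBm.compl), Set.compl_inter_self,
      measure_empty]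
  have haeA : ∀ᵐ p ∂A, p ∈ U ×ˢ Vᶜ := by
    rw [ae_iff]
    have hcompl : {p : X × X | ¬ p ∈ U ×ˢ Vᶜ} = (U ×ˢ Vᶜ)ᶜ := rfl
    rw [hcompl, hA, Measure.restrict_apply (hABm.compl), Set.compl_inter_self,
      measure_empty]
  have hJ1 : ∫⁻ z, edist z y ∂ν1 ≠ ⊤ := by
    have hrw : ∫⁻ z, edist z y ∂ν1 = ∫⁻ p, edist p.1 y ∂B :=
      lintegral_map hmeas1 measurable_fst
    rw [hrw]
    have hbound : ∀ᵐ p ∂B, edist p.1 y ≤ edist p.1 p.2 + ENNReal.ofReal r := by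
      filter_upwards [haeB] with p hp
      calc edist p.1 y ≤ edist p.1 p.2 + edist p.2 y := edist_triangle _ _ _
        _ ≤ edist p.1 p.2 + ENNReal.ofReal r := by gcongr; exact hball hp.2
    have hle : ∫⁻ p, edist p.1 y ∂B
        ≤ (∫⁻ p, edist p.1 p.2 ∂B) + ENNReal.ofReal r * B univ := by
      calc ∫⁻ p, edist p.1 y ∂B
          ≤ ∫⁻ p, (edist p.1 p.2 + ENNReal.ofReal r) ∂B := lintegral_mono_ae hbound
        _ = (∫⁻ p, edist p.1 p.2 ∂B) + ENNReal.ofReal r * B univ := by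
            rw [lintegral_add_right _ measurable_const, lintegral_const]
    exact ne_top_of_le_ne_top (ENNReal.add_ne_top.2
      ⟨ne_top_of_le_ne_top hcost hcostB,
        ENNReal.mul_ne_top ENNReal.ofReal_ne_top (measure_ne_top _ _)⟩) hle
  have hJ2 : ∫⁻ z, edist x z ∂μ2 ≠ ⊤ := by
    have hrw : ∫⁻ z, edist x z ∂μ2 = ∫⁻ p, edist x p.2 ∂A :=
      lintegral_map hmeas2 measurable_snd
    rw [hrw]
    have hbound : ∀ᵐ p ∂A, edist x p.2 ≤ ENNReal.ofReal r + edist p.1 p.2 := by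
      filter_upwards [haeA] with p hp
      calc edist x p.2 ≤ edist x p.1 + edist p.1 p.2 := edist_triangle _ _ _
        _ ≤ ENNReal.ofReal r + edist p.1 p.2 := by
            gcongr; rw [edist_comm]; exact hball hp.1
    have hle : ∫⁻ p, edist x p.2 ∂A
        ≤ ENNReal.ofReal r * A univ + ∫⁻ p, edist p.1 p.2 ∂A := by
      calc ∫⁻ p, edist x p.2 ∂A
          ≤ ∫⁻ p, (ENNReal.ofReal r + edist p.1 p.2) ∂A := lintegral_mono_ae hbound
        _ = ENNReal.ofReal r * A univ + ∫⁻ p, edist p.1 p.2 ∂A := by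
            rw [lintegral_add_left measurable_const, lintegral_const]
    exact ne_top_of_le_ne_top (ENNReal.add_ne_top.2
      ⟨ENNReal.mul_ne_top ENNReal.ofReal_ne_top (measure_ne_top _ _),
        ne_top_of_le_ne_top hcost hcostA⟩) hle
  have hcostP2 : ∫⁻ p, edist p.1 p.2 ∂(ν1.prod μ2) ≠ ⊤ := by
    have hsplit3 : ∫⁻ p, edist p.1 p.2 ∂(ν1.prod μ2)
        ≤ (∫⁻ p, edist p.1 y ∂(ν1.prod μ2)) + edist y x * (ν1.prod μ2) univ
          + ∫⁻ p, edist x p.2 ∂(ν1.prod μ2) := by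
      calc ∫⁻ p, edist p.1 p.2 ∂(ν1.prod μ2)
          ≤ ∫⁻ p, (edist p.1 y + edist y x + edist x p.2) ∂(ν1.prod μ2) :=
            lintegral_mono fun p => edist_triangle4 _ _ _ _
        _ = (∫⁻ p, (edist p.1 y + edist y x) ∂(ν1.prod μ2))
              + ∫⁻ p, edist x p.2 ∂(ν1.prod μ2) := by
            rw [lintegral_add_right _ (measurable_const.edist measurable_snd)]
        _ = (∫⁻ p, edist p.1 y ∂(ν1.prod μ2)) + edist y x * (ν1.prod μ2) univ
              + ∫⁻ p, edist x p.2 ∂(ν1.prod μ2) := by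
            rw [lintegral_add_right _ measurable_const, lintegral_const]
    have hm1 : (ν1.prod μ2).map Prod.fst = μ2 univ • ν1 := Measure.map_fst_prod
    have hm2 : (ν1.prod μ2).map Prod.snd = ν1 univ • μ2 := Measure.map_snd_prod
    have hI1 : ∫⁻ p, edist p.1 y ∂(ν1.prod μ2) = μ2 univ * ∫⁻ z, edist z y ∂ν1 := by
      rw [← lintegral_map hmeas1 measurable_fst, hm1,
        lintegral_smul_measure, smul_eq_mul]
    have hI2 : ∫⁻ p, edist x p.2 ∂(ν1.prod μ2) = ν1 univ * ∫⁻ z, edist x z ∂μ2 := by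
      rw [← lintegral_map hmeas2 measurable_snd, hm2,
        lintegral_smul_measure, smul_eq_mul]
    refine ne_top_of_le_ne_top ?_ hsplit3
    rw [hI1, hI2]
    refine ENNReal.add_ne_top.2 ⟨ENNReal.add_ne_top.2 ⟨?_, ?_⟩, ?_⟩
    · exact ENNReal.mul_ne_top (measure_ne_top _ _) hJ1
    · exact ENNReal.mul_ne_top (edist_ne_top y x) (measure_ne_top _ _)
    · exact ENNReal.mul_ne_top (measure_ne_top _ _) hJ2
  have hΓcost : ∫⁻ p, edist p.1 p.2 ∂Γ ≠ ⊤ := by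
    rw [hΓdef, lintegral_add_measure, lintegral_add_measure, lintegral_add_measure,
      lintegral_add_measure, lintegral_smul_measure, lintegral_smul_measure,
      lintegral_smul_measure, lintegral_smul_measure]
    have hone : (1 : ℝ≥0∞) - c/a ≠ ⊤ := ne_top_of_le_ne_top ENNReal.one_ne_top tsub_le_self
    have hone' : (1 : ℝ≥0∞) - c/b ≠ ⊤ := ne_top_of_le_ne_top ENNReal.one_ne_top tsub_le_self
    refine ENNReal.add_ne_top.2 ⟨ENNReal.add_ne_top.2 ⟨ENNReal.add_ne_top.2
      ⟨ENNReal.add_ne_top.2 ⟨?_, ?_⟩, ?_⟩, ?_⟩, ?_⟩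
    · exact ENNReal.mul_ne_top hone (ne_top_of_le_ne_top hcost hcostA)
    · exact ENNReal.mul_ne_top hone' (ne_top_of_le_ne_top hcost hcostB)
    · exact ne_top_of_le_ne_top hcost hcostR
    · exact ENNReal.mul_ne_top hkT hcostP1
    · exact ENNReal.mul_ne_top hkT hcostP2
  -- mass on U ×ˢ V
  have hmass : min a b ≤ Γ (U ×ˢ V) := by
    have hval : k * (μ1.prod ν2) (U ×ˢ V) = c := by
      rw [Measure.prod_prod, hμ1U, hν2V, hk, ENNReal.div_mul_cancel hab0 habT]
    have hle : k * (μ1.prod ν2) (U ×ˢ V) ≤ Γ (U ×ˢ V) := by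
      simp only [hΓdef, Measure.add_apply, Measure.smul_apply, smul_eq_mul]
      exact le_add_self.trans le_self_add
    rw [← hc, ← hval]
    exact hle
  exact ⟨Γ, k + k, hΓprob, hΓ1, hΓ2, ENNReal.add_ne_top.2 ⟨hkT, hkT⟩, hΓle, hΓcost, hmass⟩

end AuxPrivate

set_option maxHeartbeats 2000000 in
/-- For `β > 0` on a complete separable metric space, any coupling attaining the (finite)
entropic optimal transport cost has full support `supp(γ*) = supp(P) × supp(Q)`. -/
theorem entOT_plan_support {X : Type*} [MetricSpace X] [CompleteSpace X]
    [TopologicalSpace.SeparableSpace X] [MeasurableSpace X] [BorelSpace X]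
    (β : ℝ) (hβ : 0 < β)
    (P Q : Measure X) [IsProbabilityMeasure P] [IsProbabilityMeasure Q]
    (hfin : Wbeta β P Q < ⊤)
    (γstar : Measure (X × X)) (hc : IsCoupling γstar P Q)
    (hopt : entOTObj β P Q γstar = Wbeta β P Q) :
    msupp γstar = (msupp P) ×ˢ (msupp Q) := by
  classical
  haveI : SecondCountableTopology X := UniformSpace.secondCountable_of_separable X
  obtain ⟨hγprob, hγ1, hγ2⟩ := hc
  haveI := hγprob
  set π : Measure (X × X) := P.prod Q with hπ
  have hobj : entOTObj β P Q γstar < ⊤ := by rw [hopt]; exact hfin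
  rw [entOTObj] at hobj
  have hcost : (∫⁻ p, edist p.1 p.2 ∂γstar) ≠ ⊤ :=
    fun h => by rw [h] at hobj; simp at hobj
  have hβ0 : ENNReal.ofReal β ≠ 0 := by
    simp [ENNReal.ofReal_eq_zero, not_le, hβ]
  have hKLlt : KLdiv γstar π < ⊤ := by
    by_contra h
    rw [not_lt, top_le_iff] at h
    rw [h, ENNReal.mul_top hβ0] at hobj
    simp at hobj
  have hbranch : γstar ≪ π ∧ Integrable (llr γstar π) γstar := by
    by_contra h
    rw [KLdiv, if_neg h] at hKLlt
    exact (lt_irrefl _ hKLlt)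
  obtain ⟨hac, hint⟩ := hbranch
  have hKLγ : KLdiv γstar π = ENNReal.ofReal (∫ p, llr γstar π p ∂γstar) := by
    rw [KLdiv, if_pos ⟨hac, hint⟩]
  ext ⟨x, y⟩
  simp only [msupp, Set.mem_setOf_eq, Set.mem_prod]
  constructor
  · intro h
    constructor
    · intro U hU hxU
      have h2 := h (U ×ˢ (Set.univ : Set X)) (hU.prod isOpen_univ) ⟨hxU, trivial⟩
      have heq : γstar (U ×ˢ (Set.univ : Set X)) = P U := by
        rw [← hγ1, Measure.map_apply measurable_fst hU.measurableSet, Set.prod_univ]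
      rwa [heq] at h2
    · intro V hV hyV
      have h2 := h ((Set.univ : Set X) ×ˢ V) (isOpen_univ.prod hV) ⟨trivial, hyV⟩
      have heq : γstar ((Set.univ : Set X) ×ˢ V) = Q V := by
        rw [← hγ2, Measure.map_apply measurable_snd hV.measurableSet, Set.univ_prod]
      rwa [heq] at h2
  · rintro ⟨hx, hy⟩ W hW hxyW
    by_contra hpos
    have hW0 : γstar W = 0 := by
      by_contra h0
      exact hpos (pos_iff_ne_zero.mpr h0)
    obtain ⟨r, hr, hballW⟩ := Metric.isOpen_iff.1 hW (x, y) hxyW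
    have hUV : Metric.ball x r ×ˢ Metric.ball y r ⊆ W := by
      rw [ball_prod_same]; exact hballW
    have hγUV : γstar (Metric.ball x r ×ˢ Metric.ball y r) = 0 :=
      measure_mono_null hUV hW0
    have hU0 : P (Metric.ball x r) ≠ 0 :=
      (hx (Metric.ball x r) Metric.isOpen_ball (Metric.mem_ball_self hr)).ne'
    have hV0 : Q (Metric.ball y r) ≠ 0 :=
      (hy (Metric.ball y r) Metric.isOpen_ball (Metric.mem_ball_self hr)).ne'
    obtain ⟨Γ, M, hΓprob, hΓ1, hΓ2, hMT, hΓle, hΓcost, hΓmass⟩ :=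
      exists_good_coupling P Q γstar hγ1 hγ2 hcost x y r hU0 hV0 hγUV
    haveI := hΓprob
    set N : Set (X × X) := Metric.ball x r ×ˢ Metric.ball y r with hNdef
    have hNm : MeasurableSet N := measurableSet_ball.prod measurableSet_ball
    set c : ℝ≥0∞ := min (P (Metric.ball x r)) (Q (Metric.ball y r)) with hcdef
    have hc0 : c ≠ 0 := by
      simp only [hcdef, ne_eq, min_eq_iff]
      rintro (⟨h, -⟩ | ⟨h, -⟩) <;> [exact hU0 h; exact hV0 h]
    have hcT : c ≠ ⊤ := ne_top_of_le_ne_top (measure_ne_top P _) (min_le_left _ _)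
    haveI hπprob : IsProbabilityMeasure π := by rw [hπ]; infer_instance
    haveI : IsFiniteMeasure (M • π) := by
      constructor
      rw [Measure.smul_apply, smul_eq_mul]
      exact ENNReal.mul_lt_top hMT.lt_top (measure_lt_top _ _)
    have hMπac : (γstar + M • π) ≪ π := by
      refine Measure.AbsolutelyContinuous.mk fun s hs h0 => ?_
      rw [Measure.add_apply, hac h0, Measure.smul_apply, smul_eq_mul, h0, mul_zero, add_zero]
    have hΓac : Γ ≪ π := (Measure.absolutelyContinuous_of_le hΓle).trans hMπac
    have hgle : Γ.rnDeriv π ≤ᵐ[π] fun p => γstar.rnDeriv π p + M := by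
      have h1 := rnDeriv_mono_of_le (ξ := π) hΓle
      have h2 := Measure.rnDeriv_add' γstar (M • π) π
      have h3 := Measure.rnDeriv_smul_left_of_ne_top' π π hMT
      have h4 := Measure.rnDeriv_self π
      filter_upwards [h1, h2, h3, h4] with p hp1 hp2 hp3 hp4
      rw [hp2, Pi.add_apply, hp3] at hp1
      simpa [Pi.smul_apply, smul_eq_mul, hp4] using hp1
    set F : X × X → ℝ := fun p => (γstar.rnDeriv π p).toReal with hFdef
    set G : X × X → ℝ := fun p => (Γ.rnDeriv π p).toReal with hGdef
    have hFm : Measurable F := (Measure.measurable_rnDeriv _ _).ennreal_toReal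
    have hGm : Measurable G := (Measure.measurable_rnDeriv _ _).ennreal_toReal
    have hF0 : ∀ p, 0 ≤ F p := fun p => ENNReal.toReal_nonneg
    have hG0 : ∀ p, 0 ≤ G p := fun p => ENNReal.toReal_nonneg
    set Mr : ℝ := M.toReal with hMrdef
    have hMr0 : 0 ≤ Mr := ENNReal.toReal_nonneg
    have hGleF : ∀ᵐ p ∂π, G p ≤ F p + Mr := by
      filter_upwards [hgle, Measure.rnDeriv_lt_top γstar π] with p hp hfp
      have hne : γstar.rnDeriv π p + M ≠ ⊤ := ENNReal.add_ne_top.2 ⟨hfp.ne, hMT⟩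
      calc G p ≤ (γstar.rnDeriv π p + M).toReal := ENNReal.toReal_mono hne hp
        _ = F p + Mr := ENNReal.toReal_add hfp.ne hMT
    have hFint : Integrable F π := Measure.integrable_toReal_rnDeriv
    have hGint : Integrable G π := Measure.integrable_toReal_rnDeriv
    have hFint1 : ∫ p, F p ∂π = 1 := by
      rw [hFdef, Measure.integral_toReal_rnDeriv hac]
      simp
    have hGint1 : ∫ p, G p ∂π = 1 := by
      rw [hGdef, Measure.integral_toReal_rnDeriv hΓac]
      simp
    have hφF : Integrable (fun p => F p * Real.log (F p)) π := by
      have h := (MeasureTheory.integrable_rnDeriv_smul_iff hac (f := llr γstar π)).mpr hint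
      refine h.congr (Filter.Eventually.of_forall fun p => ?_)
      simp [llr_def, smul_eq_mul, hFdef]
    have hφG : Integrable (fun p => G p * Real.log (G p)) π := by
      refine Integrable.mono'
        (g := fun p => (2 + 2*Mr + 2*|Mr * Real.log Mr|)
          + (2 * F p + 2 * |F p * Real.log (F p)|)) ?_ ?_ ?_
      · exact (integrable_const _).add ((hFint.const_mul 2).add (hφF.abs.const_mul 2))
      · exact (hGm.mul hGm.log).aestronglyMeasurable
      · filter_upwards [hGleF] with p hp
        rw [Real.norm_eq_abs]
        have h1 : |G p * Real.log (G p)|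
            ≤ 1 + max 0 ((F p + Mr) * Real.log (F p + Mr)) := abs_phi_le _ _ (hG0 p) hp
        have h2 := max_phi_add_le (F p) Mr (hF0 p) hMr0
        linarith
    have hllrΓ : Integrable (llr Γ π) Γ := by
      refine (MeasureTheory.integrable_rnDeriv_smul_iff hΓac).mp ?_
      refine hφG.congr (Filter.Eventually.of_forall fun p => ?_)
      simp [llr_def, smul_eq_mul, hGdef]
    have hI0eq : ∫ p, llr γstar π p ∂γstar = ∫ p, F p * Real.log (F p) ∂π := by
      rw [← MeasureTheory.integral_rnDeriv_smul hac (f := llr γstar π)]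
      refine integral_congr_ae (Filter.Eventually.of_forall fun p => ?_)
      simp [llr_def, smul_eq_mul, hFdef]
    set I0 : ℝ := ∫ p, F p * Real.log (F p) ∂π with hI0def
    set KG : ℝ := ∫ p, |G p * Real.log (G p)| ∂π with hKGdef
    have hI0nn : 0 ≤ I0 := integral_phi_nonneg π F hF0 hFint1 hFint hφF
    -- the zero set of the density
    set S : Set (X × X) := {p | F p = 0} with hSdef
    have hSm : MeasurableSet S := hFm (measurableSet_singleton 0)
    have hγN : γstar N = 0 := hγUV
    have hfN : γstar N = ∫⁻ p in N, γstar.rnDeriv π p ∂π := by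
      conv_lhs => rw [← Measure.withDensity_rnDeriv_eq γstar π hac]
      rw [withDensity_apply _ hNm]
    have hf0N : γstar.rnDeriv π =ᵐ[π.restrict N] 0 := by
      refine (lintegral_eq_zero_iff (Measure.measurable_rnDeriv _ _)).1 ?_
      rw [← hfN] at *
      exact hfN ▸ hγN
    have hπNS : π (N \ S) = 0 := by
      have h1 : π.restrict N {p | γstar.rnDeriv π p ≠ 0} = 0 := by
        have h := hf0N
        rw [Filter.EventuallyEq, ae_iff] at h
        simpa using h
      have hmeas : MeasurableSet {p : X × X | γstar.rnDeriv π p ≠ 0} :=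
        ((Measure.measurable_rnDeriv γstar π) (measurableSet_singleton 0)).compl
      have h2 : N \ S ⊆ {p | γstar.rnDeriv π p ≠ 0} ∩ N := by
        rintro p ⟨hpN, hpS⟩
        refine ⟨fun h0 => hpS ?_, hpN⟩
        simp only [hSdef, Set.mem_setOf_eq, hFdef, h0, ENNReal.toReal_zero]
      refine le_antisymm ?_ zero_le
      calc π (N \ S) ≤ π ({p | γstar.rnDeriv π p ≠ 0} ∩ N) := measure_mono h2
        _ = π.restrict N {p | γstar.rnDeriv π p ≠ 0} := (Measure.restrict_apply hmeas).symm
        _ = 0 := h1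
    have hΓNS : Γ (N \ S) = 0 := hΓac hπNS
    have hcS : c ≤ Γ S := by
      calc c ≤ Γ N := hΓmass
        _ = Γ (N ∩ S) + Γ (N \ S) := (measure_inter_add_diff N hSm).symm
        _ = Γ (N ∩ S) := by rw [hΓNS, add_zero]
        _ ≤ Γ S := measure_mono Set.inter_subset_right
    set c_r : ℝ := c.toReal with hcrdef
    have hcr0 : 0 < c_r := ENNReal.toReal_pos hc0 hcT
    set m : ℝ := (Γ S).toReal with hmdef
    have hcm : c_r ≤ m := ENNReal.toReal_mono (measure_ne_top _ _) hcS
    have hSG : ∫ p in S, G p ∂π = m := Measure.setIntegral_toReal_rnDeriv hΓac S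
    -- choice of t
    set Creal : ℝ := (∫⁻ p, edist p.1 p.2 ∂γstar).toReal with hCrdef
    set CGreal : ℝ := (∫⁻ p, edist p.1 p.2 ∂Γ).toReal with hCGrdef
    set L : ℝ := (Creal - CGreal - 2*β*KG) / (β * c_r) with hLdef
    set t : ℝ := min (1/2) (Real.exp (L - 1)) with htdef
    have ht0 : 0 < t := lt_min (by norm_num) (Real.exp_pos _)
    have ht1 : t < 1 := lt_of_le_of_lt (min_le_left _ _) (by norm_num)
    have htlog : Real.log t < L := by
      have h1 : Real.log t ≤ L - 1 := by
        calc Real.log t ≤ Real.log (Real.exp (L-1)) :=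
              Real.log_le_log ht0 (min_le_right _ _)
          _ = L - 1 := Real.log_exp _
      linarith
    have htlog0 : Real.log t < 0 := Real.log_neg ht0 ht1
    set s' : ℝ≥0∞ := ENNReal.ofReal (1 - t) with hs'def
    set t' : ℝ≥0∞ := ENNReal.ofReal t with ht'def
    have hsum1 : s' + t' = 1 := by
      rw [hs'def, ht'def, ← ENNReal.ofReal_add (by linarith) ht0.le]
      norm_num
    have hs'T : s' ≠ ⊤ := ENNReal.ofReal_ne_top
    have ht'T : t' ≠ ⊤ := ENNReal.ofReal_ne_top
    set γt : Measure (X × X) := s' • γstar + t' • Γ with hγtdef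
    have hγt1 : γt.map Prod.fst = P := by
      rw [hγtdef, Measure.map_add _ _ measurable_fst, Measure.map_smul, Measure.map_smul,
        hγ1, hΓ1, ← add_smul, hsum1, one_smul]
    have hγt2 : γt.map Prod.snd = Q := by
      rw [hγtdef, Measure.map_add _ _ measurable_snd, Measure.map_smul, Measure.map_smul,
        hγ2, hΓ2, ← add_smul, hsum1, one_smul]
    haveI hγtprob : IsProbabilityMeasure γt := by
      constructor
      have h := congrArg (fun m : Measure X => m Set.univ) hγt1
      simp only [Measure.map_apply measurable_fst MeasurableSet.univ, Set.preimage_univ] at h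
      rw [h]
      exact measure_univ
    have hγtac : γt ≪ π := by
      refine Measure.AbsolutelyContinuous.mk fun s hs h0 => ?_
      rw [hγtdef, Measure.add_apply, Measure.smul_apply, Measure.smul_apply, hac h0, hΓac h0]
      simp
    haveI : IsFiniteMeasure (s' • γstar) := by
      constructor
      rw [Measure.smul_apply, smul_eq_mul]
      exact ENNReal.mul_lt_top hs'T.lt_top (measure_lt_top _ _)
    haveI : IsFiniteMeasure (t' • Γ) := by
      constructor
      rw [Measure.smul_apply, smul_eq_mul]
      exact ENNReal.mul_lt_top ht'T.lt_top (measure_lt_top _ _)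
    set H : X × X → ℝ := fun p => (1 - t) * F p + t * G p with hHdef
    have hHm : Measurable H := (hFm.const_mul _).add (hGm.const_mul _)
    have hγtd : (fun p => (γt.rnDeriv π p).toReal) =ᵐ[π] H := by
      have h2 := Measure.rnDeriv_add' (s' • γstar) (t' • Γ) π
      have h3 := Measure.rnDeriv_smul_left_of_ne_top' γstar π hs'T
      have h4 := Measure.rnDeriv_smul_left_of_ne_top' Γ π ht'T
      filter_upwards [h2, h3, h4, Measure.rnDeriv_lt_top γstar π, Measure.rnDeriv_lt_top Γ π]
        with p hp2 hp3 hp4 hf hg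
      rw [hγtdef, hp2, Pi.add_apply, hp3, hp4, Pi.smul_apply, Pi.smul_apply,
        smul_eq_mul, smul_eq_mul,
        ENNReal.toReal_add (ENNReal.mul_ne_top hs'T hf.ne) (ENNReal.mul_ne_top ht'T hg.ne),
        ENNReal.toReal_mul, ENNReal.toReal_mul, hs'def, ht'def,
        ENNReal.toReal_ofReal (by linarith : (0:ℝ) ≤ 1 - t), ENNReal.toReal_ofReal ht0.le]
    have hH0 : ∀ p, 0 ≤ H p := fun p =>
      add_nonneg (mul_nonneg (by linarith) (hF0 p)) (mul_nonneg ht0.le (hG0 p))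
    have hHleFG : ∀ p, H p ≤ F p + G p := by
      intro p
      have h1 := hF0 p
      have h2 := hG0 p
      simp only [hHdef]
      nlinarith
    have hφH : Integrable (fun p => H p * Real.log (H p)) π := by
      refine Integrable.mono'
        (g := fun p => 2 + 2*(F p + G p) + 2*|F p * Real.log (F p)|
          + 2*|G p * Real.log (G p)|) ?_ ?_ ?_
      · exact (((integrable_const _).add ((hFint.add hGint).const_mul 2)).add
          (hφF.abs.const_mul 2)).add (hφG.abs.const_mul 2)
      · exact (hHm.mul hHm.log).aestronglyMeasurable
      · refine Filter.Eventually.of_forall fun p => ?_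
        rw [Real.norm_eq_abs]
        beta_reduce
        have h1 : |H p * Real.log (H p)|
            ≤ 1 + max 0 ((F p + G p) * Real.log (F p + G p)) :=
          abs_phi_le _ _ (hH0 p) (hHleFG p)
        have h2 := max_phi_add_le (F p) (G p) (hF0 p) (hG0 p)
        linarith
    have hllrγt : Integrable (llr γt π) γt := by
      refine (MeasureTheory.integrable_rnDeriv_smul_iff hγtac).mp ?_
      refine hφH.congr ?_
      filter_upwards [hγtd] with p hp
      simp [llr_def, smul_eq_mul, hp]
    have hIteq : ∫ p, llr γt π p ∂γt = ∫ p, H p * Real.log (H p) ∂π := by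
      rw [← MeasureTheory.integral_rnDeriv_smul hγtac (f := llr γt π)]
      refine integral_congr_ae ?_
      filter_upwards [hγtd] with p hp
      simp [llr_def, smul_eq_mul, hp]
    set It : ℝ := ∫ p, H p * Real.log (H p) ∂π with hItdef
    have hconv : ∀ p, H p * Real.log (H p)
        ≤ (1 - t) * (F p * Real.log (F p)) + t * (G p * Real.log (G p)) := by
      intro p
      have h := Real.convexOn_mul_log.2 (Set.mem_Ici.2 (hF0 p)) (Set.mem_Ici.2 (hG0 p))
        (by linarith : (0:ℝ) ≤ 1 - t) ht0.le (by ring : (1 - t) + t = 1)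
      have h' : ((1-t) * F p + t * G p) * Real.log ((1-t) * F p + t * G p)
          ≤ (1-t) * (F p * Real.log (F p)) + t * (G p * Real.log (G p)) := by
        simpa [smul_eq_mul] using h
      simpa [hHdef] using h'
    have hKGrestr : ∀ T : Set (X × X), ∫ p in T, G p * Real.log (G p) ∂π ≤ KG := by
      intro T
      calc ∫ p in T, G p * Real.log (G p) ∂π
          ≤ ∫ p in T, |G p * Real.log (G p)| ∂π :=
            integral_mono hφG.restrict hφG.abs.restrict fun p => le_abs_self _
        _ ≤ KG := setIntegral_le_integral hφG.abs
              (Filter.Eventually.of_forall fun p => abs_nonneg _)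
    have hSpart : ∫ p in S, H p * Real.log (H p) ∂π
        = (t * Real.log t) * m + t * ∫ p in S, G p * Real.log (G p) ∂π := by
      have heq : Set.EqOn (fun p => H p * Real.log (H p))
          (fun p => (t * Real.log t) * G p + t * (G p * Real.log (G p))) S := by
        intro p hp
        have hFp : F p = 0 := hp
        have hHp : H p = t * G p := by simp [hHdef, hFp]
        simp only []
        rw [hHp, phi_mul t (G p) ht0 (hG0 p)]
      rw [setIntegral_congr_fun hSm heq,
        integral_add ((hGint.restrict).const_mul _) ((hφG.restrict).const_mul _),
        integral_const_mul, integral_const_mul, hSG]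
    have hSbound : ∫ p in S, H p * Real.log (H p) ∂π ≤ t * Real.log t * c_r + t * KG := by
      rw [hSpart]
      have hneg : t * Real.log t ≤ 0 :=
        mul_nonpos_iff.2 (Or.inl ⟨ht0.le, htlog0.le⟩)
      have h1 : t * Real.log t * m ≤ t * Real.log t * c_r :=
        mul_le_mul_of_nonpos_left hcm hneg
      have h2 := hKGrestr S
      nlinarith [mul_le_mul_of_nonneg_left h2 ht0.le]
    have hSzero : ∫ p in S, F p * Real.log (F p) ∂π = 0 := by
      have heq : Set.EqOn (fun p => F p * Real.log (F p)) (fun _ => (0:ℝ)) S := by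
        intro p hp
        simp only []
        rw [show F p = 0 from hp]
        ring
      rw [setIntegral_congr_fun hSm heq, integral_zero]
    have hI0S : ∫ p in Sᶜ, F p * Real.log (F p) ∂π = I0 := by
      have h := integral_add_compl hSm hφF
      rw [hSzero, zero_add] at h
      exact h
    have hScbound : ∫ p in Sᶜ, H p * Real.log (H p) ∂π ≤ I0 + t * KG := by
      have h1 : ∫ p in Sᶜ, H p * Real.log (H p) ∂π
          ≤ ∫ p in Sᶜ, ((1 - t) * (F p * Real.log (F p)) + t * (G p * Real.log (G p))) ∂π :=
        integral_mono hφH.restrict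
          (((hφF.restrict (s := Sᶜ)).const_mul _).add ((hφG.restrict (s := Sᶜ)).const_mul _))
          fun p => hconv p
      rw [integral_add ((hφF.restrict (s := Sᶜ)).const_mul _)
          ((hφG.restrict (s := Sᶜ)).const_mul _),
        integral_const_mul, integral_const_mul, hI0S] at h1
      have h2 := hKGrestr Sᶜ
      nlinarith [mul_le_mul_of_nonneg_left h2 ht0.le]
    have hItub : It ≤ I0 + t * (c_r * Real.log t + 2 * KG) := by
      have h := integral_add_compl hSm hφH
      have hring : t * Real.log t * c_r = t * (c_r * Real.log t) := by ring
      nlinarith [hSbound, hScbound, h]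
    have hHint : Integrable H π := (hFint.const_mul _).add (hGint.const_mul _)
    have hHint1 : ∫ p, H p ∂π = 1 := by
      simp only [hHdef]
      rw [integral_add (hFint.const_mul _) (hGint.const_mul _), integral_const_mul,
        integral_const_mul, hFint1, hGint1]
      ring
    have hIt0 : 0 ≤ It := integral_phi_nonneg π H hH0 hHint1 hHint hφH
    have hKLγt : KLdiv γt π = ENNReal.ofReal It := by
      rw [KLdiv, if_pos ⟨hγtac, hllrγt⟩, hIteq]
    have hcostγt : ∫⁻ p, edist p.1 p.2 ∂γt
        = s' * (∫⁻ p, edist p.1 p.2 ∂γstar) + t' * (∫⁻ p, edist p.1 p.2 ∂Γ) := by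
      rw [hγtdef, lintegral_add_measure, lintegral_smul_measure, lintegral_smul_measure,
        smul_eq_mul, smul_eq_mul]
    have hγtobj : entOTObj β P Q γt
        = (s' * (∫⁻ p, edist p.1 p.2 ∂γstar) + t' * (∫⁻ p, edist p.1 p.2 ∂Γ))
          + ENNReal.ofReal β * ENNReal.ofReal It := by
      rw [entOTObj, hcostγt, ← hπ, hKLγt]
    have hγsobj : entOTObj β P Q γstar
        = (∫⁻ p, edist p.1 p.2 ∂γstar) + ENNReal.ofReal β * ENNReal.ofReal I0 := by
      rw [entOTObj, ← hπ, hKLγ, hI0eq]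
    have hγtne : entOTObj β P Q γt ≠ ⊤ := by
      rw [hγtobj]
      exact ENNReal.add_ne_top.2 ⟨ENNReal.add_ne_top.2
        ⟨ENNReal.mul_ne_top hs'T hcost, ENNReal.mul_ne_top ht'T hΓcost⟩,
        ENNReal.mul_ne_top ENNReal.ofReal_ne_top ENNReal.ofReal_ne_top⟩
    have hγsne : entOTObj β P Q γstar ≠ ⊤ := by
      rw [hopt]
      exact hfin.ne
    have hreal : (entOTObj β P Q γt).toReal < (entOTObj β P Q γstar).toReal := by
      rw [hγtobj, hγsobj,
        ENNReal.toReal_add (ENNReal.add_ne_top.2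
          ⟨ENNReal.mul_ne_top hs'T hcost, ENNReal.mul_ne_top ht'T hΓcost⟩)
          (ENNReal.mul_ne_top ENNReal.ofReal_ne_top ENNReal.ofReal_ne_top),
        ENNReal.toReal_add (ENNReal.mul_ne_top hs'T hcost) (ENNReal.mul_ne_top ht'T hΓcost),
        ENNReal.toReal_add hcost (ENNReal.mul_ne_top ENNReal.ofReal_ne_top
          ENNReal.ofReal_ne_top),
        ENNReal.toReal_mul, ENNReal.toReal_mul, ENNReal.toReal_mul, ENNReal.toReal_mul,
        hs'def, ht'def, ENNReal.toReal_ofReal (by linarith : (0:ℝ) ≤ 1 - t),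
        ENNReal.toReal_ofReal ht0.le, ENNReal.toReal_ofReal hβ.le,
        ENNReal.toReal_ofReal hIt0, ENNReal.toReal_ofReal hI0nn]
      have hA : Real.log t * (β * c_r) < Creal - CGreal - 2*β*KG :=
        (lt_div_iff₀ (by positivity)).1 htlog
      have hB : t * (Real.log t * (β * c_r)) < t * (Creal - CGreal - 2*β*KG) :=
        mul_lt_mul_of_pos_left hA ht0
      have hC : β * It ≤ β * (I0 + t * (c_r * Real.log t + 2 * KG)) :=
        mul_le_mul_of_nonneg_left hItub hβ.le
      nlinarith [hB, hC]
    have hlt : entOTObj β P Q γt < entOTObj β P Q γstar :=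
      (ENNReal.toReal_lt_toReal hγtne hγsne).1 hreal
    have hWle : Wbeta β P Q ≤ entOTObj β P Q γt := by
      rw [Wbeta]
      exact iInf₂_le γt ⟨hγtprob, hγt1, hγt2⟩
    rw [hopt] at hlt
    exact absurd (lt_of_le_of_lt hWle hlt) (lt_irrefl _)


end
end

section
/- Let μ and ν be Borel probability measures on ℝ^d with finite second moments, with means m_μ and m_ν. Then W₁(μ, ν) ≤ ∫∫ ‖y − y'‖ dμ(y) dν(y') ≤ W₁(μ, ν) + (∫ ‖y − m_μ‖² dμ(y))^{1/2} + (∫ ‖y' − m_ν‖² dν(y'))^{1/2}; that is, the expected distance under the independent (product) coupling sandwiches W₁ up to the two standard deviations. -/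
open MeasureTheory
open scoped ENNReal

noncomputable section

/-- Wasserstein-1 distance (as an extended nonnegative real):
infimum over couplings of the expected distance. -/
def W1e {Y : Type*} [MeasurableSpace Y] [PseudoEMetricSpace Y] (μ ν : Measure Y) : ℝ≥0∞ :=
  ⨅ γ ∈ {γ : Measure (Y × Y) | IsCoupling γ μ ν}, ∫⁻ p, edist p.1 p.2 ∂γ

/-- Wasserstein-1 distance, as a real number. -/
def W1 {Y : Type*} [MeasurableSpace Y] [PseudoEMetricSpace Y] (μ ν : Measure Y) : ℝ :=
  (W1e μ ν).toReal

lemma sq_integral_le' {α : Type*} [MeasurableSpace α] (μ : Measure α) [IsProbabilityMeasure μ]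
    {g : α → ℝ} (hg : Integrable g μ) (hg2 : Integrable (fun x => g x ^ 2) μ) :
    (∫ x, g x ∂μ) ^ 2 ≤ ∫ x, g x ^ 2 ∂μ := by
  set a := ∫ x, g x ∂μ with ha
  have h2 : 0 ≤ ∫ x, (g x - a) ^ 2 ∂μ := integral_nonneg fun x => sq_nonneg _
  have h3 : ∫ x, (g x - a) ^ 2 ∂μ = (∫ x, g x ^ 2 ∂μ) - 2 * a * a + a ^ 2 := by
    have e : ∀ x, (g x - a) ^ 2 = g x ^ 2 - 2 * a * g x + a ^ 2 := by intro x; ring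
    have hsub : Integrable (fun x => g x ^ 2 - 2 * a * g x) μ := hg2.sub (hg.const_mul (2 * a))
    rw [show (fun x => (g x - a)^2) = fun x => g x ^ 2 - 2 * a * g x + a ^ 2 from funext e,
      integral_add hsub (integrable_const _),
      integral_sub hg2 (hg.const_mul (2 * a)), MeasureTheory.integral_const_mul, integral_const]
    simp [← ha]
  nlinarith [h2, h3]

lemma norm_int' {E : Type*} [NormedAddCommGroup E] [MeasurableSpace E] [OpensMeasurableSpace E]
    (ρ : Measure E) [IsProbabilityMeasure ρ] (h2 : Integrable (fun y => ‖y‖ ^ 2) ρ) :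
    Integrable (fun y => ‖y‖) ρ := by
  refine Integrable.mono' ((integrable_const 1).add h2) continuous_norm.aestronglyMeasurable
    (Filter.Eventually.of_forall fun y => ?_)
  simp only [Real.norm_eq_abs, abs_norm, Pi.add_apply]
  nlinarith [norm_nonneg y, sq_nonneg (‖y‖ - 1)]

/-- For probability measures on `ℝ^d` with finite second moments, the expected distance
under the independent (product) coupling sandwiches `W₁` up to the two standard
deviations:
`W₁(μ,ν) ≤ ∫∫ ‖y − y'‖ dμ dν ≤ W₁(μ,ν) + sd(μ) + sd(ν)`. -/
theorem independent_coupling_sandwich {d : ℕ}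
    (μ ν : Measure (EuclideanSpace ℝ (Fin d)))
    [IsProbabilityMeasure μ] [IsProbabilityMeasure ν]
    (hμ : Integrable (fun y => ‖y‖ ^ 2) μ) (hν : Integrable (fun y => ‖y‖ ^ 2) ν) :
    W1 μ ν ≤ ∫ y, ∫ y', ‖y - y'‖ ∂ν ∂μ ∧
    (∫ y, ∫ y', ‖y - y'‖ ∂ν ∂μ)
      ≤ W1 μ ν + Real.sqrt (∫ y, ‖y - ∫ z, z ∂μ‖ ^ 2 ∂μ)
        + Real.sqrt (∫ y', ‖y' - ∫ z, z ∂ν‖ ^ 2 ∂ν) := by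
  set Y := EuclideanSpace ℝ (Fin d)
  have hμn : Integrable (fun y => ‖y‖) μ := norm_int' μ hμ
  have hνn : Integrable (fun y => ‖y‖) ν := norm_int' ν hν
  have hμid : Integrable (fun y : Y => y) μ :=
    (integrable_norm_iff measurable_id.aestronglyMeasurable).mp hμn
  have hνid : Integrable (fun y : Y => y) ν :=
    (integrable_norm_iff measurable_id.aestronglyMeasurable).mp hνn
  set mμ : Y := ∫ z, z ∂μ with hmμ
  set mν : Y := ∫ z, z ∂ν with hmν
  set I : ℝ := ∫ y, ∫ y', ‖y - y'‖ ∂ν ∂μ with hIdef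
  -- integrability of centered norms and squares
  have hcent : ∀ (ρ : Measure Y) , ∀ _ : IsProbabilityMeasure ρ, ∀ (c : Y),
      Integrable (fun y : Y => y) ρ → Integrable (fun y => ‖y‖ ^ 2) ρ →
      Integrable (fun y => ‖y - c‖) ρ ∧ Integrable (fun y => ‖y - c‖ ^ 2) ρ := by
    intro ρ hρ c hid h2
    constructor
    · exact (hid.sub (integrable_const c)).norm
    · refine Integrable.mono'
        (((norm_int' ρ h2).const_mul (2 * ‖c‖)).add (h2.add (integrable_const (‖c‖ ^ 2))))
        (((continuous_id.sub continuous_const).norm.pow 2).aestronglyMeasurable)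
        (Filter.Eventually.of_forall fun y => ?_)
      have h1 : ‖y - c‖ ≤ ‖y‖ + ‖c‖ := norm_sub_le y c
      have h0 : (0:ℝ) ≤ ‖y - c‖ := norm_nonneg _
      simp only [Real.norm_eq_abs, abs_pow, abs_norm, Pi.add_apply]
      nlinarith [norm_nonneg y, norm_nonneg c]
  obtain ⟨hμc, hμc2⟩ := hcent μ inferInstance mμ hμid hμ
  obtain ⟨hνc, hνc2⟩ := hcent ν inferInstance mν hνid hν
  -- product coupling
  have hcoup : IsCoupling (μ.prod ν) μ ν := by
    refine ⟨inferInstance, ?_, ?_⟩ <;> simp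
  have hfst : Integrable (fun p : Y × Y => p.1) (μ.prod ν) := by
    have h := (integrable_map_measure measurable_id.aestronglyMeasurable
      measurable_fst.aemeasurable (f := Prod.fst) (g := fun y : Y => y)
      (μ := μ.prod ν)).mp
    have hmap : (μ.prod ν).map Prod.fst = μ := hcoup.2.1
    rw [hmap] at h
    exact h hμid
  have hsnd : Integrable (fun p : Y × Y => p.2) (μ.prod ν) := by
    have h := (integrable_map_measure measurable_id.aestronglyMeasurable
      measurable_snd.aemeasurable (f := Prod.snd) (g := fun y : Y => y)
      (μ := μ.prod ν)).mp
    have hmap : (μ.prod ν).map Prod.snd = ν := hcoup.2.2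
    rw [hmap] at h
    exact h hνid
  have hsubP : Integrable (fun p : Y × Y => p.1 - p.2) (μ.prod ν) := hfst.sub hsnd
  have hnormP : Integrable (fun p : Y × Y => ‖p.1 - p.2‖) (μ.prod ν) := hsubP.norm
  have hI_eq : ∫ p, ‖p.1 - p.2‖ ∂(μ.prod ν) = I := integral_prod _ hnormP
  have hInn : 0 ≤ I := by
    rw [hIdef]
    exact integral_nonneg fun y => integral_nonneg fun y' => norm_nonneg _
  -- lintegral over any coupling of the edist
  have hlin : ∀ (γ : Measure (Y × Y)), Integrable (fun p : Y × Y => p.1 - p.2) γ →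
      ∫⁻ p, edist p.1 p.2 ∂γ = ENNReal.ofReal (∫ p, ‖p.1 - p.2‖ ∂γ) := by
    intro γ hint
    rw [ofReal_integral_norm_eq_lintegral_enorm hint]
    refine lintegral_congr fun p => ?_
    rw [edist_eq_enorm_sub]
  have hW1e_le : W1e μ ν ≤ ENNReal.ofReal I := by
    refine le_trans (iInf₂_le (μ.prod ν) hcoup) ?_
    rw [hlin _ hsubP, hI_eq]
  have hW1_le : W1 μ ν ≤ I := by
    have h := ENNReal.toReal_mono ENNReal.ofReal_ne_top hW1e_le
    rwa [ENNReal.toReal_ofReal hInn] at h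
  -- mean distance ≤ W1
  have hmean : ∀ γ ∈ {γ : Measure (Y × Y) | IsCoupling γ μ ν},
      ENNReal.ofReal ‖mμ - mν‖ ≤ ∫⁻ p, edist p.1 p.2 ∂γ := by
    rintro γ ⟨hγp, hγ1, hγ2⟩
    have h1 : Integrable (fun p : Y × Y => p.1) γ := by
      have h := (integrable_map_measure measurable_id.aestronglyMeasurable
        measurable_fst.aemeasurable (f := Prod.fst) (g := fun y : Y => y) (μ := γ)).mp
      rw [hγ1] at h; exact h hμid
    have h2 : Integrable (fun p : Y × Y => p.2) γ := by
      have h := (integrable_map_measure measurable_id.aestronglyMeasurable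
        measurable_snd.aemeasurable (f := Prod.snd) (g := fun y : Y => y) (μ := γ)).mp
      rw [hγ2] at h; exact h hνid
    have hsub : Integrable (fun p : Y × Y => p.1 - p.2) γ := h1.sub h2
    have hm1 : ∫ p, (p.1 : Y) ∂γ = mμ := by
      rw [hmμ, ← hγ1]
      exact (integral_map measurable_fst.aemeasurable
        (show AEStronglyMeasurable (fun z : Y => z) (γ.map Prod.fst) from
          aestronglyMeasurable_id)).symm
    have hm2 : ∫ p, (p.2 : Y) ∂γ = mν := by
      rw [hmν, ← hγ2]
      exact (integral_map measurable_snd.aemeasurable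
        (show AEStronglyMeasurable (fun z : Y => z) (γ.map Prod.snd) from
          aestronglyMeasurable_id)).symm
    calc ENNReal.ofReal ‖mμ - mν‖ = ENNReal.ofReal ‖∫ p, (p.1 - p.2) ∂γ‖ := by
          rw [integral_sub h1 h2, hm1, hm2]
      _ ≤ ENNReal.ofReal (∫ p, ‖p.1 - p.2‖ ∂γ) :=
          ENNReal.ofReal_le_ofReal (norm_integral_le_integral_norm _)
      _ = ∫⁻ p, edist p.1 p.2 ∂γ := (hlin γ hsub).symm
  have hmean' : ENNReal.ofReal ‖mμ - mν‖ ≤ W1e μ ν := le_iInf₂ hmean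
  have hmdist : ‖mμ - mν‖ ≤ W1 μ ν := by
    have hne : W1e μ ν ≠ ∞ := (lt_of_le_of_lt hW1e_le ENNReal.ofReal_lt_top).ne
    have h := ENNReal.toReal_mono hne hmean'
    rwa [ENNReal.toReal_ofReal (norm_nonneg _)] at h
  -- step A
  have hinner_le : ∀ y : Y, ∫ y', ‖y - y'‖ ∂ν ≤ ‖y - mμ‖ + ‖mμ - mν‖ + ∫ y', ‖y' - mν‖ ∂ν := by
    intro y
    have hb : Integrable (fun y' : Y => ‖y - mμ‖ + ‖mμ - mν‖ + ‖y' - mν‖) ν :=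
      (integrable_const _).add hνc
    calc ∫ y', ‖y - y'‖ ∂ν ≤ ∫ y', (‖y - mμ‖ + ‖mμ - mν‖ + ‖y' - mν‖) ∂ν := by
          refine integral_mono_of_nonneg (Filter.Eventually.of_forall fun y' => norm_nonneg _)
            hb (Filter.Eventually.of_forall fun y' => ?_)
          show ‖y - y'‖ ≤ ‖y - mμ‖ + ‖mμ - mν‖ + ‖y' - mν‖
          have e : y - y' = (y - mμ) + (mμ - mν) + (mν - y') := by abel
          rw [e]
          have t1 := norm_add_le ((y - mμ) + (mμ - mν)) (mν - y')
          have t2 := norm_add_le (y - mμ) (mμ - mν)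
          have t3 : ‖mν - y'‖ = ‖y' - mν‖ := norm_sub_rev _ _
          linarith
      _ = ‖y - mμ‖ + ‖mμ - mν‖ + ∫ y', ‖y' - mν‖ ∂ν := by
          rw [integral_add (integrable_const _) hνc, integral_const]
          simp
          rfl
  have hstepA : I ≤ (∫ y, ‖y - mμ‖ ∂μ) + ‖mμ - mν‖ + ∫ y', ‖y' - mν‖ ∂ν := by
    have hb : Integrable (fun y : Y => ‖y - mμ‖ + ‖mμ - mν‖ + ∫ y', ‖y' - mν‖ ∂ν) μ :=
      (hμc.add (integrable_const _)).add (integrable_const _)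
    calc I ≤ ∫ y, (‖y - mμ‖ + ‖mμ - mν‖ + ∫ y', ‖y' - mν‖ ∂ν) ∂μ := by
          rw [hIdef]
          refine integral_mono_of_nonneg
            (Filter.Eventually.of_forall fun y => integral_nonneg fun y' => norm_nonneg _)
            hb (Filter.Eventually.of_forall hinner_le)
      _ = (∫ y, ‖y - mμ‖ ∂μ) + ‖mμ - mν‖ + ∫ y', ‖y' - mν‖ ∂ν := by
          have hb1 : Integrable (fun y : Y => ‖y - mμ‖ + ‖mμ - mν‖) μ :=
            hμc.add (integrable_const _)
          rw [integral_add hb1 (integrable_const _),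
            integral_add hμc (integrable_const _), integral_const, integral_const]
          simp
          rfl
  -- step B: Cauchy-Schwarz
  have hB1 : ∫ y, ‖y - mμ‖ ∂μ ≤ Real.sqrt (∫ y, ‖y - mμ‖ ^ 2 ∂μ) := by
    have hsq := sq_integral_le' μ hμc hμc2
    have h0 : 0 ≤ ∫ y, ‖y - mμ‖ ∂μ := integral_nonneg fun y => norm_nonneg _
    have h1 : 0 ≤ ∫ y, ‖y - mμ‖ ^ 2 ∂μ := integral_nonneg fun y => sq_nonneg _
    exact (Real.le_sqrt h0 h1).mpr hsq
  have hB2 : ∫ y', ‖y' - mν‖ ∂ν ≤ Real.sqrt (∫ y', ‖y' - mν‖ ^ 2 ∂ν) := by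
    have hsq := sq_integral_le' ν hνc hνc2
    have h0 : 0 ≤ ∫ y', ‖y' - mν‖ ∂ν := integral_nonneg fun y => norm_nonneg _
    have h1 : 0 ≤ ∫ y', ‖y' - mν‖ ^ 2 ∂ν := integral_nonneg fun y => sq_nonneg _
    exact (Real.le_sqrt h0 h1).mpr hsq
  exact ⟨hW1_le, by linarith⟩


end
end
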